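/- arXiv:1107.2299 — 10 statements merged into one kernel-verified Lean document; each statement's English description precedes it below -/
import Mathlib

section
/- Let (V,d) be a finite metric space in which all pairwise distances are distinct, and let H be a graph on V. For a nonempty set X ⊆ V and a vertex x, let y_X(x) denote the unique point of X nearest to x. Say that H has complete visibility for X if for every x ∈ V there is a path in H from y_X(x) to x every vertex w of which satisfies d(w, y_X(x)) < d(w, z) for all z ∈ X with z ≠ y_X(x). Then H has complete visibility for every nonempty X ⊆ V if and only if for every ordered pair (x,y) of vertices there is a path in H from y to x all of whose vertices lie in the safe set S(x,y). -/
/-- Characterization of correct iBGP signaling graphs via safe sets: a signaling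
graph `H` on a finite metric space (with all pairwise distances distinct) has the
complete visibility property for every nonempty set `X` of egress routers iff for
every ordered pair `(x,y)` there is a path in `H` from `y` to `x` all of whose
vertices lie in the safe set
`S(x,y) = {w | ∀ z, dist x y < dist x z → dist w y < dist w z} ∪ {y}`. -/
theorem stmt0 {V : Type*} [Fintype V] [MetricSpace V]
    (hdistinct : ∀ p q r s : V, p ≠ q → r ≠ s → dist p q = dist r s →
      ({p, q} : Set V) = {r, s})
    (H : SimpleGraph V) :
    -- complete visibility for every nonempty X:
    (∀ X : Set V, X.Nonempty → ∀ x : V, ∀ y ∈ X,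
        (∀ z ∈ X, z ≠ y → dist x y < dist x z) →
        ∃ p : H.Walk y x, ∀ w ∈ p.support, ∀ z ∈ X, z ≠ y → dist w y < dist w z) ↔
    -- safe signaling paths for every ordered pair:
    (∀ x y : V, ∃ p : H.Walk y x, ∀ w ∈ p.support,
        w ∈ ({w' : V | ∀ z : V, dist x y < dist x z → dist w' y < dist w' z} ∪ {y})) := by
  constructor
  · intro h x y
    obtain ⟨p, hp⟩ := h ({y} ∪ {z | dist x y < dist x z}) ⟨y, Or.inl rfl⟩ x y (Or.inl rfl)
      (by
        rintro z (rfl | hz) hzy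
        · exact absurd rfl hzy
        · exact hz)
    refine ⟨p, fun w hw => Or.inl fun z hz => ?_⟩
    exact hp w hw z (Or.inr hz) (by rintro rfl; exact lt_irrefl _ hz)
  · intro h X hX x y hyX hnear
    obtain ⟨p, hp⟩ := h x y
    refine ⟨p, fun w hw z hzX hzy => ?_⟩
    rcases hp w hw with hw' | hw'
    · exact hw' z (hnear z hzX hzy)
    · rw [hw']
      simpa using dist_pos.mpr (fun hzy' => hzy hzy'.symm)
end

section
/- Let V be a finite set with |V| = n ≥ 2, fix distinct x, y ∈ V and a set S ⊆ V with x, y ∈ S, and let c assign to each unordered pair e of vertices a real number c_e ∈ [0,1] such that for every set X with x ∈ X ⊆ S \ {y}, the sum of c_e over all edges e with one endpoint in X and the other in S \ X is at least 1. Let E' be the random edge set obtained by including each unordered pair e independently with probability min{12 · c_e · |S| · ln n, 1}. Then with probability at least 1 − 1/n³, E' contains an x–y path all of whose vertices lie in S. -/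
open MeasureTheory
open scoped ENNReal

open Classical in
/-- LP rounding lemma: let `c` be edge capacities in `[0,1]` such that every cut
of `S` separating `x` from `y` has crossing capacity at least `1` (i.e. the LP
sends one unit of flow from `x` to `y` inside `S`).  If each edge `e` is chosen
independently with probability `min{12·c_e·|S|·ln n, 1}`, then with probability
at least `1 - 1/n³` the chosen edges contain an `x`–`y` path all of whose
vertices lie in `S`. -/
theorem stmt1 {V : Type*} [Fintype V] [DecidableEq V] (n : ℕ) (hn : 2 ≤ n)
    (hcard : Fintype.card V = n)
    (x y : V) (hxy : x ≠ y) (S : Finset V) (hx : x ∈ S) (hy : y ∈ S)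
    (c : Sym2 V → ℝ) (hc0 : ∀ e, 0 ≤ c e) (hc1 : ∀ e, c e ≤ 1)
    (hcut : ∀ X : Finset V, x ∈ X → X ⊆ S.erase y →
      1 ≤ ∑ e ∈ Finset.univ.filter
            (fun e : Sym2 V => ∃ a b : V, e = s(a, b) ∧ a ∈ X ∧ b ∈ S ∧ b ∉ X),
          c e) :
    1 - 1 / (n : ℝ≥0∞) ^ 3 ≤
      (Measure.pi fun e : Sym2 V =>
        (PMF.bernoulli (min (Real.toNNReal (12 * c e * S.card * Real.log n)) 1)
          (min_le_right _ _)).toMeasure)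
        {f : Sym2 V → Bool |
          ∃ p : (SimpleGraph.fromEdgeSet {e : Sym2 V | f e = true}).Walk x y,
            ∀ v ∈ p.support, v ∈ S} := by
  classical
  set μ := (Measure.pi fun e : Sym2 V =>
        (PMF.bernoulli (min (Real.toNNReal (12 * c e * S.card * Real.log n)) 1)
          (min_le_right _ _)).toMeasure) with hμ
  set Ev := {f : Sym2 V → Bool |
          ∃ p : (SimpleGraph.fromEdgeSet {e : Sym2 V | f e = true}).Walk x y,
            ∀ v ∈ p.support, v ∈ S} with hEv
  -- abbreviations
  set a : Sym2 V → ℝ := fun e => 12 * c e * S.card * Real.log n with ha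
  set p : Sym2 V → ℝ≥0∞ := fun e => ((min (Real.toNNReal (a e)) 1 : NNReal) : ℝ≥0∞) with hp
  have hn1 : (1 : ℝ) < n := by exact_mod_cast lt_of_lt_of_le one_lt_two (by exact_mod_cast hn)
  have hn0 : (0 : ℝ) < n := lt_trans one_pos hn1
  have hlog : 0 < Real.log n := Real.log_pos hn1
  have ha0 : ∀ e, 0 ≤ a e := fun e => by
    have : (0:ℝ) ≤ 12 * c e * S.card :=
      mul_nonneg (mul_nonneg (by norm_num) (hc0 e)) (Nat.cast_nonneg _)
    exact mul_nonneg this hlog.le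
  have hS2 : 2 ≤ S.card := by
    have hsub : ({x, y} : Finset V) ⊆ S := by
      intro v hv
      rcases Finset.mem_insert.mp hv with h | h
      · exact h ▸ hx
      · exact (Finset.mem_singleton.mp h) ▸ hy
    have : ({x, y} : Finset V).card = 2 := Finset.card_pair hxy
    calc (2:ℕ) = ({x, y} : Finset V).card := this.symm
      _ ≤ S.card := Finset.card_le_card hsub
  -- cut edges and cut events
  set T : Finset V → Finset (Sym2 V) := fun X => Finset.univ.filter
      (fun e : Sym2 V => ∃ a b : V, e = s(a, b) ∧ a ∈ X ∧ b ∈ S ∧ b ∉ X) with hT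
  set Cut : Finset V → Set (Sym2 V → Bool) := fun X => {f | ∀ e ∈ T X, f e = false}
    with hCut
  set cuts : Finset (Finset V) := Finset.univ.filter
      (fun X : Finset V => x ∈ X ∧ X ⊆ S.erase y) with hcuts
  -- Step 1: complement containment
  have hsub : Evᶜ ⊆ ⋃ X ∈ cuts, Cut X := by
    intro f hf
    simp only [hEv, Set.mem_compl_iff, Set.mem_setOf_eq, not_exists] at hf
    set G := SimpleGraph.fromEdgeSet {e : Sym2 V | f e = true} with hG
    have hf' : ¬ ∃ w : G.Walk x y, ∀ v ∈ w.support, v ∈ S := by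
      rintro ⟨w, hw⟩
      exact hf w hw
    set X : Finset V := S.filter
      (fun v => ∃ w : G.Walk x v, ∀ u ∈ w.support, u ∈ S) with hX
    have hxX : x ∈ X := by
      refine Finset.mem_filter.mpr ⟨hx, ⟨SimpleGraph.Walk.nil, ?_⟩⟩
      intro u hu
      simp only [SimpleGraph.Walk.support_nil, List.mem_singleton] at hu
      exact hu ▸ hx
    have hyX : y ∉ X := by
      intro hyX
      rcases Finset.mem_filter.mp hyX with ⟨-, w, hw⟩
      exact hf' ⟨w, hw⟩
    have hXsub : X ⊆ S.erase y := by
      intro v hv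
      rcases Finset.mem_filter.mp hv with ⟨hvS, -⟩
      exact Finset.mem_erase.mpr ⟨fun h => hyX (h ▸ hv), hvS⟩
    have hXcuts : X ∈ cuts := Finset.mem_filter.mpr ⟨Finset.mem_univ _, hxX, hXsub⟩
    refine Set.mem_biUnion hXcuts ?_
    intro e he
    rcases Finset.mem_filter.mp he with ⟨-, u, v, rfl, huX, hvS, hvX⟩
    by_contra hft
    have hft' : f s(u, v) = true := by
      cases h : f s(u, v)
      · exact absurd h hft
      · rfl
    have huv : u ≠ v := fun h => hvX (h ▸ huX)
    have hadj : G.Adj u v := by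
      rw [hG, SimpleGraph.fromEdgeSet_adj]
      exact ⟨hft', huv⟩
    rcases Finset.mem_filter.mp huX with ⟨-, w, hw⟩
    refine hvX (Finset.mem_filter.mpr ⟨hvS, ⟨w.concat hadj, ?_⟩⟩)
    intro u' hu'
    rw [SimpleGraph.Walk.support_concat, List.mem_append] at hu'
    rcases hu' with h | h
    · exact hw u' h
    · exact (List.mem_singleton.mp h) ▸ hvS
  -- Step 2: measure of a cut event
  have hcutmeas : ∀ X : Finset V, μ (Cut X) = ∏ e ∈ T X, (1 - p e) := by
    intro X
    have hset : Cut X = Set.pi Set.univ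
        (fun e => if e ∈ T X then ({false} : Set Bool) else Set.univ) := by
      ext f
      simp only [hCut, Set.mem_setOf_eq, Set.mem_pi, Set.mem_univ, true_implies]
      constructor
      · intro h e
        by_cases he : e ∈ T X
        · simp [he, h e he]
        · simp [he]
      · intro h e he
        have := h e
        simpa [he] using this
    rw [hset, hμ, Measure.pi_pi]
    have hfac : ∀ e : Sym2 V,
        ((PMF.bernoulli (min (Real.toNNReal (12 * c e * S.card * Real.log n)) 1)
          (min_le_right _ _)).toMeasure)
          (if e ∈ T X then ({false} : Set Bool) else Set.univ)
        = if e ∈ T X then 1 - p e else 1 := by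
      intro e
      by_cases he : e ∈ T X
      · simp only [he, if_true]
        rw [PMF.toMeasure_apply_singleton _ _ (measurableSet_singleton _)]
        rw [PMF.bernoulli_apply]
        simp only [cond_false, hp, ha, ENNReal.coe_sub, ENNReal.coe_one]
      · simp only [he, if_false, measure_univ]
    rw [Finset.prod_congr rfl (fun e _ => hfac e), Finset.prod_ite_mem,
      Finset.univ_inter]
  -- Step 3: bound the measure of a cut event
  have hbound : ∀ X ∈ cuts,
      μ (Cut X) ≤ ENNReal.ofReal (((n : ℝ) ^ (12 * S.card))⁻¹) := by
    intro X hXc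
    rcases Finset.mem_filter.mp hXc with ⟨-, hxX, hXsub⟩
    have hcutX := hcut X hxX hXsub
    rw [hcutmeas X]
    have hfac : ∀ e : Sym2 V, 1 - p e ≤ ENNReal.ofReal (Real.exp (-(a e))) := by
      intro e
      by_cases h1 : (1 : ℝ≥0∞) ≤ ENNReal.ofReal (a e)
      · have : p e = 1 := by
          rw [hp]
          show ((min (Real.toNNReal (a e)) 1 : NNReal) : ℝ≥0∞) = 1
          rw [min_eq_right (ENNReal.one_le_coe_iff.mp h1)]
          rfl
        rw [this, tsub_self]
        exact zero_le
      · push_neg at h1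
        have hpe : p e = ENNReal.ofReal (a e) := by
          rw [hp]
          show ((min (Real.toNNReal (a e)) 1 : NNReal) : ℝ≥0∞) = ENNReal.ofReal (a e)
          rw [min_eq_left (ENNReal.coe_le_one_iff.mp h1.le)]
          rfl
        rw [hpe, ← ENNReal.ofReal_one, ← ENNReal.ofReal_sub _ (ha0 e)]
        refine ENNReal.ofReal_le_ofReal ?_
        have := Real.add_one_le_exp (-(a e))
        linarith
    calc ∏ e ∈ T X, (1 - p e)
        ≤ ∏ e ∈ T X, ENNReal.ofReal (Real.exp (-(a e))) :=
          Finset.prod_le_prod' fun e _ => hfac e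
      _ = ENNReal.ofReal (∏ e ∈ T X, Real.exp (-(a e))) :=
          (ENNReal.ofReal_prod_of_nonneg fun e _ => (Real.exp_pos _).le).symm
      _ ≤ ENNReal.ofReal (((n : ℝ) ^ (12 * S.card))⁻¹) := by
          refine ENNReal.ofReal_le_ofReal ?_
          rw [← Real.exp_sum]
          have hsum : ∑ e ∈ T X, -(a e) ≤ -((12 * S.card : ℕ) * Real.log n) := by
            rw [Finset.sum_neg_distrib]
            have h1 : (12 * S.card : ℕ) * Real.log n ≤ ∑ e ∈ T X, a e := by
              have : ∑ e ∈ T X, a e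
                  = (∑ e ∈ T X, c e) * (12 * S.card * Real.log n) := by
                rw [Finset.sum_mul]
                refine Finset.sum_congr rfl fun e _ => ?_
                rw [ha]; ring
              rw [this]
              have hK : (0:ℝ) ≤ 12 * S.card * Real.log n :=
                mul_nonneg (mul_nonneg (by norm_num) (Nat.cast_nonneg _)) hlog.le
              calc ((12 * S.card : ℕ) : ℝ) * Real.log n
                  = 1 * (12 * S.card * Real.log n) := by push_cast; ring
                _ ≤ (∑ e ∈ T X, c e) * (12 * S.card * Real.log n) :=
                  mul_le_mul_of_nonneg_right hcutX hK
            linarith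
          calc Real.exp (∑ e ∈ T X, -(a e))
              ≤ Real.exp (-((12 * S.card : ℕ) * Real.log n)) := Real.exp_le_exp.mpr hsum
            _ = ((n : ℝ) ^ (12 * S.card))⁻¹ := by
                rw [Real.exp_neg, Real.exp_nat_mul, Real.exp_log hn0]
  -- Step 4: union bound
  have hunion : μ Evᶜ ≤ ENNReal.ofReal (((n : ℝ) ^ 3)⁻¹) := by
    calc μ Evᶜ ≤ μ (⋃ X ∈ cuts, Cut X) := measure_mono hsub
      _ ≤ ∑ X ∈ cuts, μ (Cut X) := measure_biUnion_finset_le _ _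
      _ ≤ ∑ X ∈ cuts, ENNReal.ofReal (((n : ℝ) ^ (12 * S.card))⁻¹) :=
          Finset.sum_le_sum hbound
      _ = (cuts.card : ℝ≥0∞) * ENNReal.ofReal (((n : ℝ) ^ (12 * S.card))⁻¹) := by
          rw [Finset.sum_const, nsmul_eq_mul]
      _ ≤ ((2 ^ S.card : ℕ) : ℝ≥0∞) * ENNReal.ofReal (((n : ℝ) ^ (12 * S.card))⁻¹) := by
          refine mul_le_mul_left ?_ _
          refine Nat.cast_le.mpr ?_
          calc cuts.card ≤ S.powerset.card := by
                refine Finset.card_le_card ?_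
                intro X hX
                rcases Finset.mem_filter.mp hX with ⟨-, -, hXsub⟩
                exact Finset.mem_powerset.mpr (hXsub.trans (Finset.erase_subset _ _))
            _ = 2 ^ S.card := Finset.card_powerset S
      _ ≤ ENNReal.ofReal (((n : ℝ) ^ 3)⁻¹) := by
          rw [← ENNReal.ofReal_natCast, ← ENNReal.ofReal_mul (Nat.cast_nonneg _)]
          refine ENNReal.ofReal_le_ofReal ?_
          have hkey : (2 ^ S.card * n ^ 3 : ℕ) ≤ n ^ (12 * S.card) := by
            calc 2 ^ S.card * n ^ 3 ≤ n ^ S.card * n ^ 3 := by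
                  exact Nat.mul_le_mul_right _ (Nat.pow_le_pow_left hn _)
              _ = n ^ (S.card + 3) := (pow_add n _ _).symm
              _ ≤ n ^ (12 * S.card) := by
                  refine Nat.pow_le_pow_right (by omega) (by omega)
          have hpos1 : (0:ℝ) < (n:ℝ) ^ (12 * S.card) := pow_pos hn0 _
          have hpos2 : (0:ℝ) < (n:ℝ) ^ 3 := pow_pos hn0 _
          rw [← div_eq_mul_inv, inv_eq_one_div, div_le_div_iff₀ hpos1 hpos2]
          calc ((2 ^ S.card : ℕ) : ℝ) * (n:ℝ) ^ 3 = ((2 ^ S.card * n ^ 3 : ℕ) : ℝ) := by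
                push_cast; ring
            _ ≤ ((n ^ (12 * S.card) : ℕ) : ℝ) := Nat.cast_le.mpr hkey
            _ = (n:ℝ) ^ (12 * S.card) := by push_cast; ring
            _ = 1 * (n:ℝ) ^ (12 * S.card) := (one_mul _).symm
  -- Step 5: conclude
  have hof : ENNReal.ofReal (((n : ℝ) ^ 3)⁻¹) = 1 / (n : ℝ≥0∞) ^ 3 := by
    rw [ENNReal.ofReal_inv_of_pos (pow_pos hn0 3), ENNReal.ofReal_pow hn0.le,
      ENNReal.ofReal_natCast, one_div]
  rw [tsub_le_iff_right]
  have hP : IsProbabilityMeasure μ := by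
    rw [hμ]; infer_instance
  calc (1 : ℝ≥0∞) = μ Set.univ := hP.measure_univ.symm
    _ = μ (Ev ∪ Evᶜ) := by rw [Set.union_compl_self]
    _ ≤ μ Ev + μ Evᶜ := measure_union_le _ _
    _ ≤ μ Ev + 1 / (n : ℝ≥0∞) ^ 3 := by
        refine add_le_add_right ?_ _
        rw [← hof]; exact hunion
end

section
/- Let V be a finite set with safe sets S(u,v) ⊆ V satisfying u, v ∈ S(u,v) for all pairs, let t ≥ 1, and let D = {(u,v) : |S(u,v)| ≤ t}. For (u,v) ∈ D and S' with u ∈ S' ⊂ S(u,v), v ∉ S', let δ_uv(S') be the set of unordered pairs of vertices with one endpoint in S' and the other in S(u,v) \ S'. Suppose y assigns a nonnegative real to each such ((u,v), S') so that for every unordered pair e of vertices, the sum of y over all (u,v) ∈ D with both endpoints of e in S(u,v) and all S' with e ∈ δ_uv(S') is at most 1 (dual feasibility). Let H be a set of edges each of which has its dual constraint tight (the above sum equals 1), and let F be any set of edges such that every (u,v) ∈ D is joined by a u–v path using edges of F with all vertices in S(u,v). Then |H| ≤ t² · |F|. -/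
open Classical in
/-- The left-hand side of the dual constraint corresponding to the edge `e`:
the sum of `y (u,v) S'` over all demands `(u,v)` with `|S(u,v)| ≤ t` and both
endpoints of `e` in `S(u,v)`, and all cuts `S'` with `u ∈ S' ⊂ S(u,v)`, `v ∉ S'`,
such that `e` crosses the cut (one endpoint in `S'`, the other in `S(u,v) \ S'`). -/
noncomputable def dualSum {V : Type*} [Fintype V] [DecidableEq V]
    (S : V → V → Finset V) (t : ℕ) (y : V → V → Finset V → ℝ) (e : Sym2 V) : ℝ :=
  ∑ u : V, ∑ v : V, ∑ S' ∈ (S u v).powerset,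
    if (S u v).card ≤ t ∧ (∀ w ∈ e, w ∈ S u v) ∧ u ∈ S' ∧ v ∉ S' ∧
        (∃ a b : V, e = s(a, b) ∧ a ∈ S' ∧ b ∈ S u v ∧ b ∉ S')
    then y u v S' else 0

/-- The core counting argument of the primal–dual algorithm for Constrained
Connectivity-Sum: if `y` is a feasible dual solution, `H` is a set of edges all
of whose dual constraints are tight, and `F` is any edge set giving every demand
`(u,v)` with `|S(u,v)| ≤ t` a safe `u-v` path, then `|H| ≤ t² · |F|`. -/
theorem stmt4 {V : Type*} [Fintype V] [DecidableEq V]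
    (S : V → V → Finset V) (hS : ∀ u v, u ∈ S u v ∧ v ∈ S u v)
    (t : ℕ) (ht : 1 ≤ t)
    (y : V → V → Finset V → ℝ) (hy : ∀ u v S', 0 ≤ y u v S')
    (hfeas : ∀ e : Sym2 V, dualSum S t y e ≤ 1)
    (H : Finset (Sym2 V)) (hH : ∀ e ∈ H, dualSum S t y e = 1)
    (F : Finset (Sym2 V))
    (hF : ∀ u v : V, (S u v).card ≤ t →
      ∃ p : (SimpleGraph.fromEdgeSet ↑F).Walk u v, ∀ w ∈ p.support, w ∈ S u v) :
    (H.card : ℝ) ≤ (t : ℝ) ^ 2 * F.card := by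
  classical
  set C : V → V → Finset V → Sym2 V → Prop := fun u v S' e =>
    (S u v).card ≤ t ∧ (∀ w ∈ e, w ∈ S u v) ∧ u ∈ S' ∧ v ∉ S' ∧
      (∃ a b : V, e = s(a, b) ∧ a ∈ S' ∧ b ∈ S u v ∧ b ∉ S') with hC
  have hnn : ∀ u v S' (f : Sym2 V), (0 : ℝ) ≤ if C u v S' f then y u v S' else 0 := by
    intro u v S' f
    by_cases h : C u v S' f
    · rw [if_pos h]; exact hy u v S'
    · rw [if_neg h]
  -- per-triple key inequality
  have key : ∀ u v : V, ∀ S' ∈ (S u v).powerset,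
      (∑ e ∈ H, if C u v S' e then y u v S' else 0) ≤
        (t : ℝ) ^ 2 * ∑ f ∈ F, if C u v S' f then y u v S' else 0 := by
    intro u v S' hS'
    rw [Finset.mem_powerset] at hS'
    by_cases hex : ∃ e ∈ H, C u v S' e
    · obtain ⟨e, heH, hCe⟩ := hex
      obtain ⟨hcard, -, huS', hvS', -⟩ := hCe
      -- find a crossing edge in F
      obtain ⟨p, hp⟩ := hF u v hcard
      obtain ⟨d, hd, hdf, hds⟩ := p.exists_boundary_dart (S' : Set V) huS' hvS'
      have hfF : d.edge ∈ F := by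
        have hmem : d.edge ∈ p.edges := List.mem_map_of_mem (f := SimpleGraph.Dart.edge) hd
        have := p.edges_subset_edgeSet hmem
        simp only [SimpleGraph.edgeSet_fromEdgeSet, Set.mem_diff, Finset.coe_sort_coe,
          Set.mem_setOf_eq] at this
        exact_mod_cast this.1
      have hCf : C u v S' d.edge := by
        refine ⟨hcard, ?_, huS', hvS', d.fst, d.snd, ?_, hdf, ?_, hds⟩
        · intro w hw
          rw [SimpleGraph.Dart.edge, Sym2.mem_iff] at hw
          rcases hw with h | h
          · exact h ▸ hp _ (SimpleGraph.Walk.dart_fst_mem_support_of_mem_darts p hd)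
          · exact h ▸ hp _ (SimpleGraph.Walk.dart_snd_mem_support_of_mem_darts p hd)
        · rfl
        · exact hp _ (SimpleGraph.Walk.dart_snd_mem_support_of_mem_darts p hd)
      -- RHS ≥ t^2 * y
      have hRHS : (t : ℝ) ^ 2 * y u v S' ≤
          (t : ℝ) ^ 2 * ∑ f ∈ F, if C u v S' f then y u v S' else 0 := by
        refine mul_le_mul_of_nonneg_left ?_ (by positivity)
        have h1 := Finset.single_le_sum (f := fun f => if C u v S' f then y u v S' else 0)
          (fun f _ => hnn u v S' f) hfF
        rw [if_pos hCf] at h1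
        exact h1
      -- LHS ≤ (card of crossing edges in H) * y ≤ t^2 * y
      refine le_trans ?_ hRHS
      rw [← Finset.sum_filter, Finset.sum_const, nsmul_eq_mul]
      refine mul_le_mul_of_nonneg_right ?_ (hy u v S')
      have hsub : H.filter (C u v S') ⊆
          ((S u v) ×ˢ (S u v)).image (fun p : V × V => s(p.1, p.2)) := by
        intro f hf
        rw [Finset.mem_filter] at hf
        obtain ⟨-, -, -, -, -, a, b, hab, haS', hbS, -⟩ := hf
        exact Finset.mem_image.2 ⟨(a, b), Finset.mem_product.2 ⟨hS' haS', hbS⟩, hab.symm⟩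
      calc ((H.filter (C u v S')).card : ℝ)
          ≤ ((((S u v) ×ˢ (S u v)).image (fun p : V × V => s(p.1, p.2))).card : ℝ) := by
            exact_mod_cast Finset.card_le_card hsub
        _ ≤ (((S u v) ×ˢ (S u v)).card : ℝ) := by
            exact_mod_cast Finset.card_image_le
        _ = ((S u v).card : ℝ) * (S u v).card := by
            rw [Finset.card_product]; push_cast; ring
        _ ≤ (t : ℝ) ^ 2 := by
            have h2 : ((S u v).card : ℝ) ≤ t := by exact_mod_cast hcard
            nlinarith [h2, (Nat.cast_nonneg (S u v).card : (0:ℝ) ≤ (S u v).card)]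
    · push_neg at hex
      have hL : (∑ e ∈ H, if C u v S' e then y u v S' else 0) = 0 :=
        Finset.sum_eq_zero fun e he => by rw [if_neg (hex e he)]
      rw [hL]
      exact mul_nonneg (by positivity) (Finset.sum_nonneg fun f _ => hnn u v S' f)
  -- sum the key inequality
  have hswap : ∀ (E : Finset (Sym2 V)), ∑ e ∈ E, dualSum S t y e =
      ∑ u : V, ∑ v : V, ∑ S' ∈ (S u v).powerset,
        ∑ e ∈ E, if C u v S' e then y u v S' else 0 := by
    intro E
    unfold dualSum
    rw [Finset.sum_comm]
    refine Finset.sum_congr rfl fun u _ => ?_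
    rw [Finset.sum_comm]
    refine Finset.sum_congr rfl fun v _ => ?_
    rw [Finset.sum_comm]
  have h1 : (H.card : ℝ) = ∑ e ∈ H, dualSum S t y e := by
    rw [Finset.sum_congr rfl hH, Finset.sum_const, nsmul_eq_mul, mul_one]
  have h2 : ∑ f ∈ F, dualSum S t y f ≤ (F.card : ℝ) := by
    calc ∑ f ∈ F, dualSum S t y f ≤ ∑ f ∈ F, (1 : ℝ) :=
          Finset.sum_le_sum fun f _ => hfeas f
      _ = F.card := by rw [Finset.sum_const, nsmul_eq_mul, mul_one]
  calc (H.card : ℝ) = ∑ e ∈ H, dualSum S t y e := h1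
    _ = ∑ u : V, ∑ v : V, ∑ S' ∈ (S u v).powerset,
          ∑ e ∈ H, if C u v S' e then y u v S' else 0 := hswap H
    _ ≤ ∑ u : V, ∑ v : V, ∑ S' ∈ (S u v).powerset,
          (t : ℝ) ^ 2 * ∑ f ∈ F, if C u v S' f then y u v S' else 0 :=
        Finset.sum_le_sum fun u _ => Finset.sum_le_sum fun v _ =>
          Finset.sum_le_sum fun S' hS' => key u v S' hS'
    _ = (t : ℝ) ^ 2 * ∑ f ∈ F, dualSum S t y f := by
        rw [hswap F, Finset.mul_sum]
        refine Finset.sum_congr rfl fun u _ => ?_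
        rw [Finset.mul_sum]
        refine Finset.sum_congr rfl fun v _ => ?_
        rw [Finset.mul_sum]
    _ ≤ (t : ℝ) ^ 2 * F.card := mul_le_mul_of_nonneg_left h2 (by positivity)
end

section
/- For every constant ε with 0 < ε < 1/3 and all sufficiently large n, setting k = ⌈n^{2(1+ε)/(1−3ε)}⌉, there exists an assignment of a bijection π_{uv} : [k] → [k] to every unordered pair {u,v} of distinct elements of [n] (with a fixed orientation of each pair) such that every labeling L : [n] → (subsets of [k]) with the property that for every pair {u,v} there is some a ∈ L(u) with π_{uv}(a) ∈ L(v), satisfies Σ_{u ∈ [n]} |L(u)| > ε·n². -/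
set_option maxHeartbeats 1000000

open Finset

lemma fiber_card_mul {k : ℕ} (a b : Fin k) :
    (univ.filter fun σ : Equiv.Perm (Fin k) => σ a = b).card * k = k.factorial := by
  classical
  have hall : ∀ b' : Fin k,
      (univ.filter fun σ : Equiv.Perm (Fin k) => σ a = b').card
        = (univ.filter fun σ : Equiv.Perm (Fin k) => σ a = b).card := by
    intro b'
    refine Finset.card_bij' (fun σ _ => Equiv.swap b' b * σ)
      (fun σ _ => Equiv.swap b' b * σ) ?_ ?_ ?_ ?_
    · intro σ hσ
      simp only [mem_filter, mem_univ, true_and] at hσ ⊢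
      simp [hσ, Equiv.Perm.mul_apply]
    · intro σ hσ
      simp only [mem_filter, mem_univ, true_and] at hσ ⊢
      simp [hσ, Equiv.Perm.mul_apply]
    · intro σ _; simp [← mul_assoc]
    · intro σ _; simp [← mul_assoc]
  have hsum : ∑ b' : Fin k, (univ.filter fun σ : Equiv.Perm (Fin k) => σ a = b').card
      = k.factorial := by
    rw [← Finset.card_eq_sum_card_fiberwise (f := fun σ : Equiv.Perm (Fin k) => σ a)
      (t := univ) (fun _ _ => mem_univ _)]
    simp [Fintype.card_perm]
  rw [← hsum]
  simp only [hall]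
  simp [mul_comm]

lemma pair_count {k : ℕ} (A B : Finset (Fin k)) :
    (univ.filter fun σ : Equiv.Perm (Fin k) => ∃ a ∈ A, σ a ∈ B).card * k
      ≤ A.card * B.card * k.factorial := by
  classical
  have hsub : (univ.filter fun σ : Equiv.Perm (Fin k) => ∃ a ∈ A, σ a ∈ B)
      ⊆ A.biUnion fun a => B.biUnion fun b => univ.filter fun σ => σ a = b := by
    intro σ hσ
    simp only [mem_filter, mem_univ, true_and] at hσ
    obtain ⟨a, ha, hb⟩ := hσ
    simp only [mem_biUnion, mem_filter, mem_univ, true_and]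
    exact ⟨a, ha, σ a, hb, rfl⟩
  calc (univ.filter fun σ : Equiv.Perm (Fin k) => ∃ a ∈ A, σ a ∈ B).card * k
      ≤ (∑ a ∈ A, ∑ b ∈ B, (univ.filter fun σ : Equiv.Perm (Fin k) => σ a = b).card) * k := by
        gcongr
        exact (Finset.card_le_card hsub).trans <| (Finset.card_biUnion_le).trans <| by
          gcongr with a ha; exact Finset.card_biUnion_le
    _ = ∑ a ∈ A, ∑ b ∈ B, (univ.filter fun σ : Equiv.Perm (Fin k) => σ a = b).card * k := by
        rw [Finset.sum_mul]; congr 1; ext a; rw [Finset.sum_mul]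
    _ = A.card * B.card * k.factorial := by
        simp [fiber_card_mul, Finset.sum_const, mul_assoc]

lemma pi_filter_card {ι : Type*} [Fintype ι] [DecidableEq ι] {X : ι → Type*}
    [∀ i, Fintype (X i)] [∀ i, DecidableEq (X i)] (P : ∀ i, X i → Prop)
    [∀ i, DecidablePred (P i)] :
    (univ.filter fun f : ∀ i, X i => ∀ i, P i (f i)).card
      = ∏ i, (univ.filter (P i)).card := by
  classical
  rw [← Fintype.card_subtype]
  rw [Fintype.card_congr (Equiv.subtypePiEquivPi (p := P))]
  rw [Fintype.card_pi]
  congr 1; ext i; rw [Fintype.card_subtype]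

lemma pi_filter_card2 {ι κ : Type*} [Fintype ι] [DecidableEq ι] [Fintype κ] [DecidableEq κ]
    {X : Type*} [Fintype X] [DecidableEq X] (P : ι → κ → X → Prop)
    [∀ i j, DecidablePred (P i j)] :
    (univ.filter fun f : ι → κ → X => ∀ i j, P i j (f i j)).card
      = ∏ p : ι × κ, (univ.filter (P p.1 p.2)).card := by
  classical
  rw [pi_filter_card (X := fun _ : ι => κ → X) (P := fun i g => ∀ j, P i j (g j))]
  rw [Fintype.prod_prod_type]
  congr 1; ext i
  exact pi_filter_card (X := fun _ : κ => X) (P := fun j x => P i j x)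

lemma lt_pairs_card (n : ℕ) :
    (univ.filter fun p : Fin n × Fin n => p.1 < p.2).card * 2 + n = n * n := by
  classical
  have hswap : (univ.filter fun p : Fin n × Fin n => p.1 < p.2).card
      = (univ.filter fun p : Fin n × Fin n => p.2 < p.1).card := by
    refine Finset.card_bij' (fun p _ => p.swap) (fun p _ => p.swap) ?_ ?_ ?_ ?_ <;>
      simp [Finset.mem_filter]
  have hunion : (univ.filter fun p : Fin n × Fin n => p.1 < p.2)
      ∪ (univ.filter fun p : Fin n × Fin n => p.2 < p.1)
      = univ.filter fun p : Fin n × Fin n => p.1 ≠ p.2 := by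
    rw [← Finset.filter_or]
    congr 1; ext p
    constructor
    · rintro (h | h) <;> [exact ne_of_lt h; exact (ne_of_lt h).symm]
    · exact fun h => lt_or_gt_of_ne h
  have hdisj : Disjoint (univ.filter fun p : Fin n × Fin n => p.1 < p.2)
      (univ.filter fun p : Fin n × Fin n => p.2 < p.1) := by
    rw [Finset.disjoint_filter]
    intro p _ h1 h2
    exact absurd (h1.trans h2) (lt_irrefl _)
  have hne : (univ.filter fun p : Fin n × Fin n => p.1 ≠ p.2).card = n * n - n := by
    have : (univ.filter fun p : Fin n × Fin n => p.1 ≠ p.2) = (univ : Finset (Fin n)).offDiag := by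
      ext p; simp [Finset.mem_offDiag]
    rw [this, Finset.offDiag_card]
    simp
  have := Finset.card_union_of_disjoint hdisj
  rw [hunion, hne, ← hswap] at this
  have hn : n ≤ n * n := by
    cases n with
    | zero => simp
    | succ m => exact Nat.le_mul_of_pos_left _ (Nat.succ_pos m)
  omega

lemma size_exp_bound {n : ℕ} (hn : 0 < n) (s : ℕ) :
    (s : ℝ) ≤ n * Real.exp (s / n) := by
  have h1 : (s : ℝ) / n ≤ Real.exp ((s : ℝ) / n) :=
    le_trans (by linarith [Real.add_one_le_exp ((s:ℝ)/n)]) (le_refl _)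
  calc (s : ℝ) = n * ((s : ℝ) / n) := by field_simp
    _ ≤ n * Real.exp ((s : ℝ) / n) := by
        apply mul_le_mul_of_nonneg_left h1 (by positivity)

lemma valid_count {n k : ℕ} (hk : 0 < k) (hn : 0 < n) (M : ℕ)
    (L : Fin n → Finset (Fin k)) (hL : ∑ u, (L u).card ≤ M) :
    ((univ.filter fun π : Fin n → Fin n → Equiv.Perm (Fin k) =>
        ∀ u v, u < v → ∃ a ∈ L u, π u v a ∈ L v).card : ℝ)
      ≤ (k.factorial : ℝ) ^ (n * n)
          * ((n : ℝ) ^ 2 / k) ^ (univ.filter fun p : Fin n × Fin n => p.1 < p.2).card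
          * Real.exp (2 * M) := by
  classical
  have hkR : (0 : ℝ) < k := by exact_mod_cast hk
  have hnR : (0 : ℝ) < n := by exact_mod_cast hn
  set S := univ.filter fun p : Fin n × Fin n => p.1 < p.2 with hS
  set w : Fin n × Fin n → ℝ := fun p =>
    if p.1 < p.2 then ((n : ℝ) ^ 2 / k)
      * Real.exp (((L p.1).card + (L p.2).card) / n) else 1 with hw
  have hcard : (univ.filter fun π : Fin n → Fin n → Equiv.Perm (Fin k) =>
        ∀ u v, u < v → ∃ a ∈ L u, π u v a ∈ L v).card
      = ∏ p : Fin n × Fin n, (univ.filter fun σ : Equiv.Perm (Fin k) =>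
          p.1 < p.2 → ∃ a ∈ L p.1, σ a ∈ L p.2).card :=
    by rw [← pi_filter_card2 (fun u v (σ : Equiv.Perm (Fin k)) => u < v → ∃ a ∈ L u, σ a ∈ L v)]
       congr 1
       ext π
       simp only [Finset.mem_filter]
  rw [hcard]
  push_cast
  have hfac : ∀ p : Fin n × Fin n,
      (((univ.filter fun σ : Equiv.Perm (Fin k) =>
        p.1 < p.2 → ∃ a ∈ L p.1, σ a ∈ L p.2).card : ℕ) : ℝ)
      ≤ (k.factorial : ℝ) * w p := by
    intro p
    by_cases h : p.1 < p.2
    · have heq : (univ.filter fun σ : Equiv.Perm (Fin k) =>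
          p.1 < p.2 → ∃ a ∈ L p.1, σ a ∈ L p.2)
          = univ.filter fun σ : Equiv.Perm (Fin k) => ∃ a ∈ L p.1, σ a ∈ L p.2 := by
        apply Finset.filter_congr
        intro σ _
        simp [h]
      rw [heq]
      have h1 := pair_count (L p.1) (L p.2)
      have h2 : (((univ.filter fun σ : Equiv.Perm (Fin k) =>
          ∃ a ∈ L p.1, σ a ∈ L p.2).card : ℕ) : ℝ)
          ≤ ((L p.1).card : ℝ) * (L p.2).card * k.factorial / k := by
        rw [le_div_iff₀ hkR]
        exact_mod_cast h1
      refine h2.trans ?_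
      have h3 : ((L p.1).card : ℝ) * (L p.2).card
          ≤ (n : ℝ) ^ 2 * Real.exp (((L p.1).card + (L p.2).card) / n) := by
        calc ((L p.1).card : ℝ) * (L p.2).card
            ≤ (n * Real.exp ((L p.1).card / n)) * (n * Real.exp ((L p.2).card / n)) := by
              apply mul_le_mul (size_exp_bound hn _) (size_exp_bound hn _)
                (by positivity) (by positivity)
          _ = (n : ℝ) ^ 2 * Real.exp (((L p.1).card + (L p.2).card) / n) := by
              rw [add_div, Real.exp_add]
              ring
      rw [hw]
      simp only [if_pos h]
      calc ((L p.1).card : ℝ) * (L p.2).card * k.factorial / k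
          = ((L p.1).card : ℝ) * (L p.2).card * (k.factorial / k) := by ring
        _ ≤ ((n : ℝ) ^ 2 * Real.exp (((L p.1).card + (L p.2).card) / n)) * (k.factorial / k) := by
            apply mul_le_mul_of_nonneg_right h3 (by positivity)
        _ = (k.factorial : ℝ) * ((n : ℝ) ^ 2 / k * Real.exp (((L p.1).card + (L p.2).card) / n)) := by
            ring
    · have heq : (univ.filter fun σ : Equiv.Perm (Fin k) =>
          p.1 < p.2 → ∃ a ∈ L p.1, σ a ∈ L p.2) = univ := by
        apply Finset.filter_true_of_mem
        intro σ _ hlt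
        exact absurd hlt h
      rw [heq, hw]
      simp only [if_neg h, mul_one]
      rw [Finset.card_univ, Fintype.card_perm, Fintype.card_fin]
  calc (∏ p : Fin n × Fin n, (((univ.filter fun σ : Equiv.Perm (Fin k) =>
          p.1 < p.2 → ∃ a ∈ L p.1, σ a ∈ L p.2).card : ℕ) : ℝ))
      ≤ ∏ p : Fin n × Fin n, (k.factorial : ℝ) * w p := by
        apply Finset.prod_le_prod (fun p _ => by positivity) (fun p _ => hfac p)
    _ = (k.factorial : ℝ) ^ (n * n) * ∏ p : Fin n × Fin n, w p := by
        rw [Finset.prod_mul_distrib, Finset.prod_const, Finset.card_univ,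
          Fintype.card_prod, Fintype.card_fin]
    _ ≤ (k.factorial : ℝ) ^ (n * n) * (((n : ℝ) ^ 2 / k) ^ S.card * Real.exp (2 * M)) := by
        apply mul_le_mul_of_nonneg_left _ (by positivity)
        have hprodw : ∏ p : Fin n × Fin n, w p
            = ((n : ℝ) ^ 2 / k) ^ S.card
              * Real.exp (∑ p ∈ S, (((L p.1).card + (L p.2).card : ℝ)) / n) := by
          rw [← Finset.prod_filter (fun p : Fin n × Fin n => p.1 < p.2)
            (fun p => ((n : ℝ) ^ 2 / k) * Real.exp (((L p.1).card + (L p.2).card) / n))]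
          rw [Finset.prod_mul_distrib, Finset.prod_const, Real.exp_sum]
        rw [hprodw]
        apply mul_le_mul_of_nonneg_left _ (by positivity)
        apply Real.exp_le_exp.2
        calc ∑ p ∈ S, (((L p.1).card + (L p.2).card : ℝ)) / n
            ≤ ∑ p : Fin n × Fin n, (((L p.1).card + (L p.2).card : ℝ)) / n := by
              apply Finset.sum_le_sum_of_subset_of_nonneg (Finset.filter_subset _ _)
              intro p _ _
              positivity
          _ = 2 * (∑ u, ((L u).card : ℝ)) := by
              rw [← Finset.sum_div, Fintype.sum_prod_type]
              have hsum2 : ∑ u : Fin n, ∑ v : Fin n, (((L u).card : ℝ) + ((L v).card : ℝ))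
                  = 2 * (n : ℝ) * ∑ u, ((L u).card : ℝ) := by
                simp only [Finset.sum_add_distrib, Finset.sum_const, Finset.card_univ,
                  Fintype.card_fin, nsmul_eq_mul, ← Finset.sum_mul, ← Finset.mul_sum]
                ring
              rw [hsum2]
              rw [div_eq_iff hnR.ne']
              ring
          _ ≤ 2 * M := by
              have : (∑ u, ((L u).card : ℝ)) ≤ M := by exact_mod_cast hL
              linarith
    _ = (k.factorial : ℝ) ^ (n * n) * ((n : ℝ) ^ 2 / k) ^ S.card * Real.exp (2 * M) := by ring

lemma label_count (n k M : ℕ) (hk0 : 0 < k) :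
    (univ.filter fun L : Fin n → Finset (Fin k) => ∑ u, (L u).card ≤ M).card
      ≤ (M + 1) ^ n * k ^ M := by
  classical
  set W : Finset (Fin n → Fin (M + 1)) :=
    univ.filter (fun s => ∑ u, (s u : ℕ) ≤ M) with hW
  have hsub : (univ.filter fun L : Fin n → Finset (Fin k) => ∑ u, (L u).card ≤ M)
      ⊆ W.biUnion fun s => Fintype.piFinset fun u => Finset.powersetCard (s u : ℕ) univ := by
    intro L hL
    simp only [mem_filter, mem_univ, true_and] at hL
    have hcard : ∀ u, (L u).card < M + 1 := by
      intro u
      have : (L u).card ≤ ∑ u, (L u).card :=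
        Finset.single_le_sum (f := fun u => (L u).card) (fun _ _ => Nat.zero_le _) (mem_univ u)
      omega
    refine Finset.mem_biUnion.2 ⟨fun u => ⟨(L u).card, hcard u⟩, ?_, ?_⟩
    · simp only [hW, mem_filter, mem_univ, true_and]
      exact hL
    · simp [Fintype.mem_piFinset, Finset.mem_powersetCard_univ]
  calc (univ.filter fun L : Fin n → Finset (Fin k) => ∑ u, (L u).card ≤ M).card
      ≤ ∑ s ∈ W, (Fintype.piFinset fun u => Finset.powersetCard (s u : ℕ) univ).card :=
        (Finset.card_le_card hsub).trans Finset.card_biUnion_le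
    _ ≤ ∑ _s ∈ W, k ^ M := by
        refine Finset.sum_le_sum fun s hs => ?_
        rw [Fintype.card_piFinset]
        simp only [hW, mem_filter] at hs
        calc ∏ u, (Finset.powersetCard (s u : ℕ) univ).card
            = ∏ u, Nat.choose k (s u : ℕ) := by
              simp [Finset.card_powersetCard]
          _ ≤ ∏ u, k ^ (s u : ℕ) := Finset.prod_le_prod' fun u _ => Nat.choose_le_pow k _
          _ = k ^ (∑ u, (s u : ℕ)) := by rw [← Finset.prod_pow_eq_pow_sum]
          _ ≤ k ^ M := Nat.pow_le_pow_right hk0 hs.2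
    _ ≤ W.card * k ^ M := by rw [Finset.sum_const, smul_eq_mul]
    _ ≤ (M + 1) ^ n * k ^ M := by
        gcongr
        calc W.card ≤ (univ : Finset (Fin n → Fin (M + 1))).card := Finset.card_le_card (Finset.filter_subset _ _)
          _ = (M + 1) ^ n := by simp [Fintype.card_fun]

/-- There exist hard instances of Unique Games for the multi-labeling
(Min-Rep style) objective: for every `0 < ε < 1/3` and all sufficiently large
`n`, with alphabet size `k = ⌈n^{2(1+ε)/(1-3ε)}⌉` there is an assignment of a
permutation `π u v` of the alphabet to every (oriented) pair `u < v` of vertices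
of `K_n` such that every multi-labeling `L` satisfying all pairs — that is, for
every `u < v` some `a ∈ L u` has `π u v a ∈ L v` — uses more than `ε·n²` labels
in total. -/
theorem stmt9 (ε : ℝ) (hε0 : 0 < ε) (hε : ε < 1 / 3) :
    ∃ N : ℕ, ∀ n : ℕ, N ≤ n →
      ∀ k : ℕ, k = ⌈(n : ℝ) ^ (2 * (1 + ε) / (1 - 3 * ε))⌉₊ →
        ∃ π : Fin n → Fin n → Equiv.Perm (Fin k),
          ∀ L : Fin n → Finset (Fin k),
            (∀ u v : Fin n, u < v → ∃ a ∈ L u, π u v a ∈ L v) →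
            ε * (n : ℝ) ^ 2 < ∑ u : Fin n, ((L u).card : ℝ) := by
  classical
  have h3ε : 0 < 1 - 3 * ε := by linarith
  set α : ℝ := 2 * (1 + ε) / (1 - 3 * ε) with hα
  set δ : ℝ := ε * (1 + ε) / (1 - 3 * ε) with hδ
  have hδ0 : 0 < δ := by
    apply div_pos (by nlinarith) h3ε
  have hα2 : 2 < α := by
    rw [hα, lt_div_iff₀ h3ε]; nlinarith
  have hδkey : δ = (α - 2) / 2 - (α + 1) * ε := by
    rw [hδ, hα]; field_simp [h3ε.ne']; linear_combination (-(1 + ε)) * (mul_inv_cancel₀ h3ε.ne')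
  refine ⟨max 55 (⌈(6 + (α - 2)) / δ⌉₊ + 1), fun n hn k hk => ?_⟩
  have hn55 : (55 : ℕ) ≤ n := le_trans (le_max_left _ _) hn
  have hb55 : (55 : ℝ) ≤ (n : ℝ) := by exact_mod_cast hn55
  set b : ℝ := (n : ℝ) with hb
  have hb0 : (0 : ℝ) < b := by linarith
  have hb1 : (1 : ℝ) ≤ b := by linarith
  have hb2 : (2 : ℝ) ≤ b := by linarith
  have hn0 : 0 < n := by omega
  have hlogb : (4 : ℝ) ≤ Real.log b := by
    rw [Real.le_log_iff_exp_le hb0]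
    calc Real.exp 4 = Real.exp 1 ^ (4 : ℕ) := by
          rw [← Real.exp_one_rpow (4 : ℝ)]
          rw [← Real.rpow_natCast (Real.exp 1) 4]
          norm_num
      _ ≤ (2.7182818286 : ℝ) ^ (4 : ℕ) := by
          apply pow_le_pow_left₀ (Real.exp_pos 1).le Real.exp_one_lt_d9.le
      _ ≤ 55 := by norm_num
    · linarith
  have hlogb0 : 0 < Real.log b := by linarith
  -- b is large enough for condition (a)
  have hbig : (6 + (α - 2)) / δ ≤ b := by
    have h1 : ((⌈(6 + (α - 2)) / δ⌉₊ + 1 : ℕ) : ℝ) ≤ b := by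
      exact_mod_cast Nat.cast_le.2 (le_trans (le_max_right _ _) hn)
    calc (6 + (α - 2)) / δ ≤ (⌈(6 + (α - 2)) / δ⌉₊ : ℝ) := Nat.le_ceil _
      _ ≤ ((⌈(6 + (α - 2)) / δ⌉₊ + 1 : ℕ) : ℝ) := by push_cast; linarith
      _ ≤ b := h1
  -- bounds on k
  have hk0 : 0 < k := by
    rw [hk]; apply Nat.ceil_pos.2; positivity
  have hkR0 : (0 : ℝ) < k := by exact_mod_cast hk0
  have hk_low : b ^ α ≤ (k : ℝ) := by rw [hk]; exact Nat.le_ceil _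
  have hk_up : (k : ℝ) ≤ b ^ (α + 1) := by
    rw [hk]
    have h1 : (⌈b ^ α⌉₊ : ℝ) < b ^ α + 1 := Nat.ceil_lt_add_one (by positivity)
    have h2 : (1 : ℝ) ≤ b ^ α := Real.one_le_rpow hb1 (by linarith)
    calc (⌈b ^ α⌉₊ : ℝ) ≤ b ^ α + b ^ α := by linarith
      _ = 2 * b ^ α := by ring
      _ ≤ b * b ^ α := by nlinarith
      _ = b ^ (α + 1) := by
          rw [Real.rpow_add hb0, Real.rpow_one]; ring
  set M : ℕ := ⌊ε * b ^ 2⌋₊ with hM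
  have hMle : (M : ℝ) ≤ ε * b ^ 2 := Nat.floor_le (by positivity)
  set Z : ℕ := (univ.filter fun p : Fin n × Fin n => p.1 < p.2).card with hZ
  have hZval : (Z : ℝ) = (b ^ 2 - b) / 2 := by
    have := lt_pairs_card n
    have hcast : (Z : ℝ) * 2 + b = b * b := by
      rw [hZ, hb]; exact_mod_cast congrArg (Nat.cast (R := ℝ)) this
    nlinarith [hcast]
  -- The bad event
  set Bad : Finset (Fin n → Fin n → Equiv.Perm (Fin k)) :=
    univ.filter (fun π => ∃ L : Fin n → Finset (Fin k),
      (∀ u v, u < v → ∃ a ∈ L u, π u v a ∈ L v) ∧ ∑ u, (L u).card ≤ M) with hBad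
  suffices hcard : Bad.card < Fintype.card (Fin n → Fin n → Equiv.Perm (Fin k)) by
    have hne : ¬ (univ : Finset (Fin n → Fin n → Equiv.Perm (Fin k))) ⊆ Bad := by
      intro hsub
      have := Finset.card_le_card hsub
      rw [Finset.card_univ] at this
      omega
    obtain ⟨π, -, hπ⟩ := Finset.not_subset.1 hne
    refine ⟨π, fun L hL => ?_⟩
    by_contra hcon
    push_neg at hcon
    apply hπ
    rw [hBad, Finset.mem_filter]
    refine ⟨Finset.mem_univ _, L, hL, ?_⟩
    apply Nat.le_floor
    push_cast
    exact hcon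
  -- counting
  set 𝓛 : Finset (Fin n → Finset (Fin k)) :=
    univ.filter (fun L => ∑ u, (L u).card ≤ M) with h𝓛
  set V : (Fin n → Finset (Fin k)) → Finset (Fin n → Fin n → Equiv.Perm (Fin k)) :=
    fun L => univ.filter (fun π => ∀ u v, u < v → ∃ a ∈ L u, π u v a ∈ L v) with hV
  have hsub : Bad ⊆ 𝓛.biUnion V := by
    intro π hπ
    rw [hBad, Finset.mem_filter] at hπ
    obtain ⟨-, L, hL1, hL2⟩ := hπ
    apply Finset.mem_biUnion.2
    exact ⟨L, Finset.mem_filter.2 ⟨Finset.mem_univ _, hL2⟩,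
      Finset.mem_filter.2 ⟨Finset.mem_univ _, hL1⟩⟩
  have hΩ : Fintype.card (Fin n → Fin n → Equiv.Perm (Fin k)) = k.factorial ^ (n * n) := by
    rw [Fintype.card_fun, Fintype.card_fun, Fintype.card_perm, Fintype.card_fin,
      Fintype.card_fin, ← pow_mul]
  -- the real bound
  set BND : ℝ := (k.factorial : ℝ) ^ (n * n) * (b ^ 2 / k) ^ Z * Real.exp (2 * M) with hBND
  have hmain : (Bad.card : ℝ) ≤ ((M + 1) ^ n * k ^ M : ℕ) * BND := by
    calc (Bad.card : ℝ) ≤ ((𝓛.biUnion V).card : ℝ) := by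
          exact_mod_cast Finset.card_le_card hsub
      _ ≤ ((∑ L ∈ 𝓛, (V L).card : ℕ) : ℝ) := by exact_mod_cast Finset.card_biUnion_le
      _ = ∑ L ∈ 𝓛, ((V L).card : ℝ) := by push_cast; rfl
      _ ≤ ∑ L ∈ 𝓛, BND := by
          apply Finset.sum_le_sum
          intro L hL
          rw [h𝓛, Finset.mem_filter] at hL
          rw [hBND]
          exact valid_count hk0 hn0 M L hL.2
      _ = (𝓛.card : ℝ) * BND := by rw [Finset.sum_const, nsmul_eq_mul]
      _ ≤ ((M + 1) ^ n * k ^ M : ℕ) * BND := by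
          apply mul_le_mul_of_nonneg_right _ _
          · exact_mod_cast label_count n k M hk0
          · rw [hBND]; positivity
  -- final analytic inequality
  have hfinal : (((M + 1) ^ n * k ^ M : ℕ) : ℝ) * ((b ^ 2 / k) ^ Z * Real.exp (2 * M)) < 1 := by
    have hexp3 : Real.exp (3 * Real.log b) = b ^ (3 : ℕ) := by
      rw [mul_comm, Real.exp_mul, Real.exp_log hb0, ← Real.rpow_natCast b 3]
      norm_num
    have e1 : ((M + 1 : ℕ) : ℝ) ≤ Real.exp (3 * Real.log b) := by
      rw [hexp3]
      push_cast
      have hb4 : (4 : ℝ) ≤ b ^ 2 := by nlinarith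
      have hεb : ε * b ^ 2 ≤ b ^ 2 := by nlinarith [sq_nonneg b]
      have hb3 : b ^ 2 + b ^ 2 ≤ b ^ 3 := by nlinarith
      calc (M : ℝ) + 1 ≤ ε * b ^ 2 + 1 := by linarith
        _ ≤ b ^ 2 + b ^ 2 := by nlinarith
        _ ≤ b ^ 3 := hb3
    have e2 : (k : ℝ) ≤ Real.exp ((α + 1) * Real.log b) := by
      calc (k : ℝ) ≤ b ^ (α + 1) := hk_up
        _ = Real.exp ((α + 1) * Real.log b) := by
            rw [Real.rpow_def_of_pos hb0, mul_comm]
    have e3 : b ^ 2 / (k : ℝ) ≤ Real.exp ((2 - α) * Real.log b) := by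
      have h2 : b ^ (2 : ℕ) = Real.exp (2 * Real.log b) := by
        rw [mul_comm, Real.exp_mul, Real.exp_log hb0, ← Real.rpow_natCast b 2]
        norm_num
      have h3 : Real.exp (α * Real.log b) ≤ (k : ℝ) := by
        rw [mul_comm, ← Real.rpow_def_of_pos hb0]
        exact hk_low
      calc b ^ 2 / (k : ℝ) ≤ Real.exp (2 * Real.log b) / Real.exp (α * Real.log b) := by
            rw [← h2]
            apply div_le_div₀ (by positivity) (le_refl _) (by positivity) h3
        _ = Real.exp ((2 - α) * Real.log b) := by
            rw [← Real.exp_sub]; ring_nf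
    have epos : (0:ℝ) < Real.exp (3 * Real.log b) := Real.exp_pos _
    calc (((M + 1) ^ n * k ^ M : ℕ) : ℝ) * ((b ^ 2 / k) ^ Z * Real.exp (2 * M))
        ≤ (Real.exp (3 * Real.log b)) ^ n * (Real.exp ((α + 1) * Real.log b)) ^ M
            * ((Real.exp ((2 - α) * Real.log b)) ^ Z * Real.exp (2 * (ε * b ^ 2))) := by
          push_cast
          have t1 : ((M : ℝ) + 1) ^ n ≤ (Real.exp (3 * Real.log b)) ^ n := by
            apply pow_le_pow_left₀ (by positivity) (by exact_mod_cast e1)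
          have t2 : (k : ℝ) ^ M ≤ (Real.exp ((α + 1) * Real.log b)) ^ M := by
            apply pow_le_pow_left₀ (by positivity) e2
          have t3 : (b ^ 2 / (k:ℝ)) ^ Z ≤ (Real.exp ((2 - α) * Real.log b)) ^ Z := by
            apply pow_le_pow_left₀ (by positivity) e3
          have t4 : Real.exp (2 * (M:ℝ)) ≤ Real.exp (2 * (ε * b ^ 2)) := by
            apply Real.exp_le_exp.2; linarith
          have h1 : (0:ℝ) ≤ ((M : ℝ) + 1) ^ n := by positivity
          have h2 : (0:ℝ) ≤ (k : ℝ) ^ M := by positivity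
          have h3 : (0:ℝ) ≤ (b ^ 2 / (k:ℝ)) ^ Z := by positivity
          have h4 : (0:ℝ) ≤ Real.exp (2 * (M:ℝ)) := by positivity
          apply mul_le_mul (mul_le_mul t1 t2 h2 (by positivity))
            (mul_le_mul t3 t4 h4 (by positivity)) (by positivity) (by positivity)
      _ = Real.exp ((n : ℝ) * (3 * Real.log b) + (M : ℝ) * ((α + 1) * Real.log b)
            + (Z : ℝ) * ((2 - α) * Real.log b) + 2 * (ε * b ^ 2)) := by
          rw [← Real.exp_nat_mul, ← Real.exp_nat_mul, ← Real.exp_nat_mul,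
            ← Real.exp_add, ← Real.exp_add, ← Real.exp_add]
          congr 1
          ring
      _ < 1 := by
          rw [Real.exp_lt_one_iff]
          rw [hZval]
          -- goal: n*(3 log b) + M*((α+1) log b) + ((b²-b)/2)*((2-α) log b) + 2εb² < 0
          have key1 : (3 + (α - 2) / 2) * (b * Real.log b) ≤ (δ / 2) * (b ^ 2 * Real.log b) := by
            have hc : 3 + (α - 2) / 2 ≤ δ / 2 * b := by
              rw [div_le_iff₀ hδ0] at hbig
              linarith
            calc (3 + (α - 2) / 2) * (b * Real.log b)
                ≤ (δ / 2 * b) * (b * Real.log b) :=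
                  mul_le_mul_of_nonneg_right hc (mul_pos hb0 hlogb0).le
              _ = (δ / 2) * (b ^ 2 * Real.log b) := by ring
          have key2 : 2 * (ε * b ^ 2) < (δ / 2) * (b ^ 2 * Real.log b) := by
            have hεδ : ε < δ := by
              rw [hδ, lt_div_iff₀ h3ε]
              nlinarith
            have h4 : 4 * ε < δ * Real.log b := by
              calc 4 * ε < 4 * δ := by linarith
                _ ≤ δ * Real.log b := by nlinarith
            have hb2pos : (0 : ℝ) < b ^ 2 / 2 := by positivity
            calc 2 * (ε * b ^ 2) = (4 * ε) * (b ^ 2 / 2) := by ring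
              _ < (δ * Real.log b) * (b ^ 2 / 2) := by
                  exact mul_lt_mul_of_pos_right h4 hb2pos
              _ = (δ / 2) * (b ^ 2 * Real.log b) := by ring
          have hMlog : (M : ℝ) * ((α + 1) * Real.log b) ≤ (α + 1) * ε * (b ^ 2 * Real.log b) := by
            have hα1 : (0:ℝ) < α + 1 := by linarith
            nlinarith [mul_le_mul_of_nonneg_right hMle (mul_pos hα1 hlogb0).le]
          have hδeq : (α - 2) / 2 = δ + (α + 1) * ε := by rw [hδkey]; ring
          rw [← hb]
          have hringeq : b * (3 * Real.log b)
              + ((b ^ 2 - b) / 2) * ((2 - α) * Real.log b)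
              = (3 + (α - 2) / 2) * (b * Real.log b)
                - ((α - 2) / 2) * (b ^ 2 * Real.log b) := by ring
          have hsubst : (3 + (α - 2) / 2) * (b * Real.log b)
              + ((α + 1) * ε) * (b ^ 2 * Real.log b)
              - ((α - 2) / 2) * (b ^ 2 * Real.log b)
              = (3 + (α - 2) / 2) * (b * Real.log b) - δ * (b ^ 2 * Real.log b) := by
            rw [hδeq]; ring
          linarith [key1, key2, hMlog, hringeq, hsubst]
  -- put together
  have hpos : (0 : ℝ) < (k.factorial : ℝ) ^ (n * n) := by positivity
  have : (Bad.card : ℝ) < ((Fintype.card (Fin n → Fin n → Equiv.Perm (Fin k)) : ℕ) : ℝ) := by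
    rw [hΩ]
    calc (Bad.card : ℝ) ≤ ((M + 1) ^ n * k ^ M : ℕ) * BND := hmain
      _ = (k.factorial : ℝ) ^ (n * n)
          * ((((M + 1) ^ n * k ^ M : ℕ) : ℝ) * ((b ^ 2 / k) ^ Z * Real.exp (2 * M))) := by
          rw [hBND]; ring
      _ < (k.factorial : ℝ) ^ (n * n) * 1 := by
          apply mul_lt_mul_of_pos_left hfinal hpos
      _ = ((k.factorial ^ (n * n) : ℕ) : ℝ) := by push_cast; ring
  exact_mod_cast this
end

section
/- Let V be a finite set with a symmetric hierarchical safe-set family, and let G be a graph on V that contains, for every hard pair {x,y}, an x–y path all of whose vertices lie in S(x,y). Then for every pair {x,y} (easy or hard) G contains an x–y path all of whose vertices lie in S(x,y); that is, G is a feasible solution. -/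
/-- There is a path from `x` to `y` in the graph with edge set `E`
all of whose vertices lie in `S`. -/
def SafeWalk {V : Type*} (E : Set (Sym2 V)) (S : Set V) (x y : V) : Prop :=
  ∃ p : (SimpleGraph.fromEdgeSet E).Walk x y, ∀ v ∈ p.support, v ∈ S

/-- The pair `{x,y}` is easy: some `z ∈ S(x,y)` has both `S(x,z)` and `S(y,z)`
strictly contained in `S(x,y)`. A pair is hard if it is not easy. -/
def Easy {V : Type*} [DecidableEq V] (S : V → V → Finset V) (x y : V) : Prop :=
  ∃ z ∈ S x y, S x z ⊂ S x y ∧ S y z ⊂ S x y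

/-- If a graph `G` has, for every hard pair, a safe path, then it has a safe
path for every pair, i.e. `G` is feasible. -/
theorem stmt14 {V : Type*} [Fintype V] [DecidableEq V] (S : V → V → Finset V)
    (hmem : ∀ x y, x ∈ S x y ∧ y ∈ S x y)
    (hsymm : ∀ x y, S x y = S y x)
    (hhier : ∀ x y z, z ∈ S x y → S x z ⊆ S x y ∧ S z y ⊆ S x y)
    (G : Set (Sym2 V))
    (hhard : ∀ x y, ¬ Easy S x y → SafeWalk G ↑(S x y) x y) :
    ∀ x y, SafeWalk G ↑(S x y) x y := by
  intro x y
  have key : ∀ n x y, (S x y).card ≤ n → SafeWalk G ↑(S x y) x y := by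
    intro n
    induction n with
    | zero =>
      intro x y h
      exact absurd (Finset.card_pos.mpr ⟨x, (hmem x y).1⟩) (by omega)
    | succ n ih =>
      intro x y h
      by_cases he : Easy S x y
      · obtain ⟨z, hz, hxz, hyz⟩ := he
        obtain ⟨p, hp⟩ := ih x z (by have := Finset.card_lt_card hxz; omega)
        obtain ⟨q, hq⟩ := ih y z (by have := Finset.card_lt_card hyz; omega)
        refine ⟨p.append q.reverse, ?_⟩
        intro v hv
        rw [SimpleGraph.Walk.mem_support_append_iff] at hv
        cases hv with
        | inl hv => exact Finset.mem_coe.mpr (hxz.subset (hp v hv))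
        | inr hv =>
          rw [SimpleGraph.Walk.support_reverse, List.mem_reverse] at hv
          exact Finset.mem_coe.mpr (hyz.subset (hq v hv))
      · exact hhard x y he
  exact key ((S x y).card) x y le_rfl
end

section
/- Let V be a finite set with a symmetric hierarchical safe-set family and let {x,y} be a hard pair. Then S(u,v) ⊆ S(x,y) for all u, v ∈ S(x,y). -/
/-- For a hard pair `{x,y}` of a symmetric hierarchical safe-set family,
`S(u,v) ⊆ S(x,y)` for all `u, v ∈ S(x,y)`. -/
theorem stmt15 {V : Type*} [Fintype V] [DecidableEq V] (S : V → V → Finset V)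
    (hmem : ∀ x y, x ∈ S x y ∧ y ∈ S x y)
    (hsymm : ∀ x y, S x y = S y x)
    (hhier : ∀ x y z, z ∈ S x y → S x z ⊆ S x y ∧ S z y ⊆ S x y)
    (x y : V) (hhard : ¬ Easy S x y) :
    ∀ u ∈ S x y, ∀ v ∈ S x y, S u v ⊆ S x y := by
  intro u hu v hv
  have h1 : S x u ⊆ S x y := (hhier x y u hu).1
  have h2 : S y u ⊆ S x y := by rw [hsymm y u]; exact (hhier x y u hu).2
  have hnot : ¬ (S x u ⊂ S x y ∧ S y u ⊂ S x y) := fun hc => hhard ⟨u, hu, hc⟩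
  have : S x u = S x y ∨ S y u = S x y := by
    by_contra hc
    push_neg at hc
    exact hnot ⟨lt_of_le_of_ne h1 (hc.1), lt_of_le_of_ne h2 hc.2⟩
  rcases this with h | h
  · have hv' : v ∈ S x u := h ▸ hv
    have := (hhier x u v hv').2
    rw [← h]
    rw [hsymm u v]
    exact this
  · have hv' : v ∈ S y u := h ▸ hv
    have := (hhier y u v hv').2
    rw [← h]
    rw [hsymm u v]
    exact this
end

section
/- Let V be a finite set with a symmetric hierarchical safe-set family, and let OPT be a feasible edge set of minimum cardinality. Then every edge {x,y} ∈ OPT is a hard pair. -/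
open SimpleGraph

/-- Splice lemma: replace every use of the edge `s(x,y)` in a walk by a fixed detour. -/
lemma splice_aux {V : Type*} {G G2 : SimpleGraph V} {x y : V}
    (hGG2 : ∀ u v, G.Adj u v → s(u, v) ≠ s(x, y) → G2.Adj u v)
    (T : Set V) (D : G2.Walk x y) (hD : ∀ v ∈ D.support, v ∈ T) :
    ∀ {a b : V} (p : G.Walk a b), (∀ v ∈ p.support, v ∈ T) →
      ∃ q : G2.Walk a b, ∀ v ∈ q.support, v ∈ T := by
  intro a b p
  induction p with
  | nil =>
    intro h
    exact ⟨Walk.nil, by simpa using h⟩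
  | @cons u v w h p ih =>
    intro hsup
    have hsup' : ∀ t ∈ p.support, t ∈ T := fun t ht =>
      hsup t (by rw [Walk.support_cons]; exact List.mem_cons_of_mem _ ht)
    obtain ⟨q', hq'⟩ := ih hsup'
    by_cases hc : s(u, v) = s(x, y)
    · rw [Sym2.eq_iff] at hc
      rcases hc with ⟨hu, hv⟩ | ⟨hu, hv⟩
      · subst hu; subst hv
        refine ⟨D.append q', ?_⟩
        intro t ht
        rw [Walk.mem_support_append_iff] at ht
        exact ht.elim (hD t) (hq' t)
      · subst hu; subst hv
        refine ⟨D.reverse.append q', ?_⟩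
        intro t ht
        rw [Walk.mem_support_append_iff] at ht
        rcases ht with ht | ht
        · exact hD t (by rwa [Walk.support_reverse, List.mem_reverse] at ht)
        · exact hq' t ht
    · refine ⟨Walk.cons (hGG2 u v h hc) q', ?_⟩
      intro t ht
      rw [Walk.support_cons] at ht
      rcases List.mem_cons.mp ht with rfl | ht
      · exact hsup t (by rw [Walk.support_cons]; exact List.mem_cons_self)
      · exact hq' t ht

/-- Every edge of a minimum-cardinality feasible edge set is a hard pair. -/
theorem stmt16 {V : Type*} [Fintype V] [DecidableEq V] (S : V → V → Finset V)
    (hmem : ∀ x y, x ∈ S x y ∧ y ∈ S x y)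
    (hsymm : ∀ x y, S x y = S y x)
    (hhier : ∀ x y z, z ∈ S x y → S x z ⊆ S x y ∧ S z y ⊆ S x y)
    (OPT : Finset (Sym2 V))
    (hfeas : ∀ x y, SafeWalk ↑OPT ↑(S x y) x y)
    (hmin : ∀ G' : Finset (Sym2 V), (∀ x y, SafeWalk ↑G' ↑(S x y) x y) →
      OPT.card ≤ G'.card) :
    ∀ e ∈ OPT, ∀ x y : V, e = s(x, y) → ¬ Easy S x y := by
  intro e he x y hexy hEasy
  obtain ⟨z, hz, hxz, hyz⟩ := hEasy
  set G : SimpleGraph V := fromEdgeSet ↑OPT with hG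
  set G2 : SimpleGraph V := fromEdgeSet ↑(OPT.erase e) with hG2
  have hGG2 : ∀ u v, G.Adj u v → s(u, v) ≠ s(x, y) → G2.Adj u v := by
    intro u v huv hne
    rw [hG, fromEdgeSet_adj] at huv
    rw [hG2, fromEdgeSet_adj]
    refine ⟨?_, huv.2⟩
    simp only [Finset.coe_erase, Set.mem_diff, Finset.mem_coe, Set.mem_singleton_iff]
    exact ⟨huv.1, by rw [hexy]; exact hne⟩
  -- transfer a walk avoiding e into G2
  have htrans : ∀ {a b : V} (p : G.Walk a b), e ∉ p.edges →
      ∃ q : G2.Walk a b, q.support = p.support := by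
    intro a b p hep
    have hsub : ∀ f ∈ p.edges, f ∈ G2.edgeSet := by
      intro f hf
      have h1 : f ∈ G.edgeSet := p.edges_subset_edgeSet hf
      rw [hG, edgeSet_fromEdgeSet] at h1
      rw [hG2, edgeSet_fromEdgeSet]
      refine ⟨?_, h1.2⟩
      simp only [Finset.coe_erase, Set.mem_diff, Finset.mem_coe, Set.mem_singleton_iff]
      exact ⟨h1.1, fun hfe => hep (hfe ▸ hf)⟩
    exact ⟨p.transfer G2 hsub, Walk.support_transfer _ _⟩
  -- the detour from x to y in G2 within S x y
  obtain ⟨p1, hp1⟩ := hfeas x z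
  obtain ⟨p2, hp2⟩ := hfeas z y
  have he1 : e ∉ p1.edges := by
    intro hmem1
    rw [hexy] at hmem1
    have hy' : y ∈ p1.support := p1.snd_mem_support_of_mem_edges hmem1
    have hyS : y ∈ S x z := hp1 y hy'
    exact hxz.not_subset (hhier x z y hyS).1
  have he2 : e ∉ p2.edges := by
    intro hmem2
    rw [hexy] at hmem2
    have hx' : x ∈ p2.support := p2.fst_mem_support_of_mem_edges hmem2
    have hxS : x ∈ S z y := hp2 x hx'
    have h2 : S x y ⊆ S z y := (hhier z y x hxS).2
    rw [← hsymm z y] at hyz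
    exact hyz.not_subset h2
  obtain ⟨q1, hq1⟩ := htrans p1 he1
  obtain ⟨q2, hq2⟩ := htrans p2 he2
  have hsub1 : S x z ⊆ S x y := (hhier x y z hz).1
  have hsub2 : S z y ⊆ S x y := (hhier x y z hz).2
  set D : G2.Walk x y := q1.append q2 with hD
  have hDsup : ∀ v ∈ D.support, v ∈ (S x y : Set V) := by
    intro v hv
    rw [hD, Walk.mem_support_append_iff] at hv
    rcases hv with hv | hv
    · exact hsub1 (hp1 v (hq1 ▸ hv))
    · exact hsub2 (hp2 v (hq2 ▸ hv))
  -- feasibility of OPT.erase e, by strong induction on the cardinality of S a b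
  have key : ∀ n, ∀ a b : V, (S a b).card < n → SafeWalk ↑(OPT.erase e) ↑(S a b) a b := by
    intro n
    induction n with
    | zero => exact fun a b h => absurd h (Nat.not_lt_zero _)
    | succ n ih =>
      intro a b hcard
      by_cases hxyab : S x y ⊆ S a b
      · obtain ⟨p, hp⟩ := hfeas a b
        have hDsup' : ∀ v ∈ D.support, v ∈ (↑(S a b) : Set V) := fun v hv =>
          hxyab (hDsup v hv)
        obtain ⟨q, hq⟩ := splice_aux hGG2 (↑(S a b)) D hDsup' p hp
        exact ⟨q, hq⟩
      · obtain ⟨p, hp⟩ := hfeas a b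
        by_cases hep : e ∈ p.edges
        · rw [hexy] at hep
          have hxS : x ∈ S a b := hp x (p.fst_mem_support_of_mem_edges hep)
          have hyS : y ∈ S a b := hp y (p.snd_mem_support_of_mem_edges hep)
          have h1 : S a x ⊆ S a b := (hhier a b x hxS).1
          have h2 : S x b ⊆ S a b := (hhier a b x hxS).2
          have h1' : S a x ≠ S a b := by
            intro heq
            have hy1 : y ∈ S a x := heq ▸ hyS
            have := (hhier a x y hy1).2
            exact hxyab (le_trans ((hsymm x y).le.trans this) (heq ▸ h1))
          have h2' : S x b ≠ S a b := by
            intro heq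
            have hy2 : y ∈ S x b := heq ▸ hyS
            have := (hhier x b y hy2).1
            exact hxyab (this.trans h2)
          have hc1 : (S a x).card < n :=
            lt_of_lt_of_le (Finset.card_lt_card (lt_of_le_of_ne h1 h1'))
              (Nat.lt_succ_iff.mp hcard)
          have hc2 : (S x b).card < n :=
            lt_of_lt_of_le (Finset.card_lt_card (lt_of_le_of_ne h2 h2'))
              (Nat.lt_succ_iff.mp hcard)
          obtain ⟨w1, hw1⟩ := ih a x hc1
          obtain ⟨w2, hw2⟩ := ih x b hc2
          refine ⟨w1.append w2, ?_⟩
          intro v hv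
          rw [Walk.mem_support_append_iff] at hv
          rcases hv with hv | hv
          · exact h1 (hw1 v hv)
          · exact h2 (hw2 v hv)
        · obtain ⟨q, hq⟩ := htrans p hep
          exact ⟨q, fun v hv => hp v (hq ▸ hv)⟩
  have hfeas' : ∀ a b, SafeWalk ↑(OPT.erase e) ↑(S a b) a b := fun a b =>
    key ((S a b).card + 1) a b (Nat.lt_succ_self _)
  have hle := hmin (OPT.erase e) hfeas'
  have hlt : (OPT.erase e).card < OPT.card := Finset.card_erase_lt_of_mem he
  omega
end

section
/- Let V be a finite set with a symmetric hierarchical safe-set family, let OPT be a feasible edge set of minimum cardinality, and let ⪯ be a linear order on the hard pairs such that {a,b} ⪯ {c,d} implies |S(a,b)| ≤ |S(c,d)|. Assign each edge {u,v} ∈ OPT to the ⪯-first hard pair {x,y} with u, v ∈ S(x,y) (such a pair exists since {u,v} itself is hard), and for a hard pair {x,y} let OPT_{⪯{x,y}} be the set of edges assigned to pairs ⪯ {x,y}. Then for every hard pair {x,y}, the graph on vertex set S(x,y) whose edges are those of OPT_{⪯{x,y}} with both endpoints in S(x,y) is connected. -/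

private lemma walk_reach {V : Type*} {G H : SimpleGraph V} {T : Set V}
    (hAdj : ∀ x y, G.Adj x y → x ∈ T → y ∈ T → H.Adj x y) :
    ∀ {a b : V} (p : G.Walk a b), (∀ v ∈ p.support, v ∈ T) → H.Reachable a b := by
  intro a b p
  induction p with
  | nil => intro _; exact SimpleGraph.Reachable.refl _
  | @cons a c b h p ih =>
    intro hsup
    have ha : a ∈ T := hsup a (by simp)
    have hb : c ∈ T := hsup c (by simp [SimpleGraph.Walk.support_cons])
    exact (SimpleGraph.Adj.reachable (hAdj _ _ h ha hb)).trans
      (ih (fun v hv => hsup v (by simp [SimpleGraph.Walk.support_cons, hv])))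

/-- Let `OPT` be a minimum feasible edge set, let `ps` enumerate the hard pairs
(with distinct endpoints) in an order `⪯` monotone in safe-set cardinality, and
assign each edge of `OPT` to the `⪯`-first hard pair whose safe set contains both
of its endpoints.  Then for every hard pair `p_k`, the restriction to `S(p_k)` of
the set of edges assigned to pairs `⪯ p_k` is connected on `S(p_k)`. -/
theorem stmt17 {V : Type*} [Fintype V] [DecidableEq V] (S : V → V → Finset V)
    (hmem : ∀ x y, x ∈ S x y ∧ y ∈ S x y)
    (hsymm : ∀ x y, S x y = S y x)
    (hhier : ∀ x y z, z ∈ S x y → S x z ⊆ S x y ∧ S z y ⊆ S x y)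
    (OPT : Finset (Sym2 V))
    (hfeas : ∀ x y, SafeWalk ↑OPT ↑(S x y) x y)
    (hmin : ∀ G' : Finset (Sym2 V), (∀ x y, SafeWalk ↑G' ↑(S x y) x y) →
      OPT.card ≤ G'.card)
    -- `ps` is an enumeration of the hard pairs, sorted by safe-set cardinality
    (N : ℕ) (ps : Fin N → V × V)
    (hpsHard : ∀ k, (ps k).1 ≠ (ps k).2 ∧ ¬ Easy S (ps k).1 (ps k).2)
    (hpsSurj : ∀ x y : V, x ≠ y → ¬ Easy S x y →
      ∃ k, ps k = (x, y) ∨ ps k = (y, x))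
    (hpsInj : ∀ k k' : Fin N,
      (ps k' = ps k ∨ ps k' = ((ps k).2, (ps k).1)) → k' = k)
    (hpsMono : ∀ k k' : Fin N, k ≤ k' →
      (S (ps k).1 (ps k).2).card ≤ (S (ps k').1 (ps k').2).card)
    -- `asgn` assigns each edge of `OPT` to the first hard pair whose safe set
    -- contains both endpoints
    (asgn : Sym2 V → Fin N)
    (hasgnMem : ∀ e ∈ OPT, ∀ w ∈ e, w ∈ S (ps (asgn e)).1 (ps (asgn e)).2)
    (hasgnMin : ∀ e ∈ OPT, ∀ k : Fin N,
      (∀ w ∈ e, w ∈ S (ps k).1 (ps k).2) → asgn e ≤ k) :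
    ∀ k : Fin N, ∀ u ∈ S (ps k).1 (ps k).2, ∀ v ∈ S (ps k).1 (ps k).2,
      (SimpleGraph.fromEdgeSet
        {e : Sym2 V | e ∈ OPT ∧ asgn e ≤ k ∧
          ∀ w ∈ e, w ∈ S (ps k).1 (ps k).2}).Reachable u v := by
  intro k u hu v hv
  set x := (ps k).1 with hx
  set y := (ps k).2 with hy
  have key : ∀ w : V, w ∈ S x y → (SimpleGraph.fromEdgeSet
      {e : Sym2 V | e ∈ OPT ∧ asgn e ≤ k ∧
        ∀ w ∈ e, w ∈ S (ps k).1 (ps k).2}).Reachable x w := by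
    intro w hw
    obtain ⟨p, hp⟩ := hfeas x w
    have hsub : (S x w : Set V) ⊆ (S x y : Set V) := by
      intro z hz
      exact (hhier x y w hw).1 hz
    refine walk_reach ?_ p (fun v hv => hsub (hp v hv))
    intro a b hab haT hbT
    rw [SimpleGraph.fromEdgeSet_adj] at hab ⊢
    refine ⟨⟨hab.1, ?_, ?_⟩, hab.2⟩
    · exact hasgnMin _ hab.1 k (fun z hz => by
        rcases Sym2.mem_iff.mp hz with rfl | rfl
        · exact haT
        · exact hbT)
    · intro z hz
      rcases Sym2.mem_iff.mp hz with rfl | rfl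
      · exact haT
      · exact hbT
  exact (key u hu).symm.trans (key v hv)
end

section
/- Let V be a finite set with a symmetric hierarchical safe-set family, let ⪯ be a linear order on the hard pairs such that {a,b} ⪯ {c,d} implies |S(a,b)| ≤ |S(c,d)|, let OPT be a feasible edge set of minimum cardinality with each edge assigned to the ⪯-first hard pair whose safe set contains both its endpoints, and let (A_k) be a greedy run: processing the hard pairs p_1 ≺ p_2 ≺ … in order, A_0 = ∅ and A_k = A_{k−1} ∪ F_k where F_k is a minimum-cardinality set of edges with both endpoints in S(p_k) making the restriction of A_{k−1} ∪ F_k to S(p_k) connected. Then for every hard pair {x,y} = p_k, the endpoints of any edge of OPT assigned to a pair strictly ⪯-before {x,y} with both endpoints in S(x,y) are connected in the restriction of A_{k−1} to S(x,y). -/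
/-- Let `OPT` be a minimum feasible edge set with each edge assigned (by `asgn`)
to the `⪯`-first hard pair whose safe set contains both of its endpoints, where the
hard pairs are enumerated by `ps` in an order monotone in safe-set cardinality,
and let `A` be a greedy run, with `A (k+1) = A k ∪ Fk k` where `Fk k` is a
minimum-cardinality set of edges inside `S(p_k)` making the restriction of
`A k ∪ Fk k` to `S(p_k)` connected.  Then for every hard pair `p_k`, the endpoints
of any edge of `OPT` assigned to a pair strictly before `p_k` whose endpoints both
lie in `S(p_k)` are connected in the restriction of `A k` to `S(p_k)`. -/
theorem stmt18 {V : Type*} [Fintype V] [DecidableEq V] (S : V → V → Finset V)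
    (hmem : ∀ x y, x ∈ S x y ∧ y ∈ S x y)
    (hsymm : ∀ x y, S x y = S y x)
    (hhier : ∀ x y z, z ∈ S x y → S x z ⊆ S x y ∧ S z y ⊆ S x y)
    (OPT : Finset (Sym2 V))
    (hfeas : ∀ x y, SafeWalk ↑OPT ↑(S x y) x y)
    (hmin : ∀ G' : Finset (Sym2 V), (∀ x y, SafeWalk ↑G' ↑(S x y) x y) →
      OPT.card ≤ G'.card)
    -- `ps` is an enumeration of the hard pairs, sorted by safe-set cardinality
    (N : ℕ) (ps : Fin N → V × V)
    (hpsHard : ∀ k, (ps k).1 ≠ (ps k).2 ∧ ¬ Easy S (ps k).1 (ps k).2)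
    (hpsSurj : ∀ x y : V, x ≠ y → ¬ Easy S x y →
      ∃ k, ps k = (x, y) ∨ ps k = (y, x))
    (hpsInj : ∀ k k' : Fin N,
      (ps k' = ps k ∨ ps k' = ((ps k).2, (ps k).1)) → k' = k)
    (hpsMono : ∀ k k' : Fin N, k ≤ k' →
      (S (ps k).1 (ps k).2).card ≤ (S (ps k').1 (ps k').2).card)
    -- `asgn` assigns each edge of `OPT` to the first hard pair whose safe set
    -- contains both endpoints
    (asgn : Sym2 V → Fin N)
    (hasgnMem : ∀ e ∈ OPT, ∀ w ∈ e, w ∈ S (ps (asgn e)).1 (ps (asgn e)).2)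
    (hasgnMin : ∀ e ∈ OPT, ∀ k : Fin N,
      (∀ w ∈ e, w ∈ S (ps k).1 (ps k).2) → asgn e ≤ k)
    -- the greedy run
    (A : ℕ → Finset (Sym2 V)) (Fk : Fin N → Finset (Sym2 V))
    (hA0 : A 0 = ∅)
    (hAsucc : ∀ k : Fin N, A (k + 1) = A k ∪ Fk k)
    (hFkIn : ∀ k : Fin N, ∀ e ∈ Fk k, ∀ w ∈ e, w ∈ S (ps k).1 (ps k).2)
    (hFkConn : ∀ k : Fin N, ∀ u ∈ S (ps k).1 (ps k).2, ∀ v ∈ S (ps k).1 (ps k).2,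
      (SimpleGraph.fromEdgeSet
        {e : Sym2 V | e ∈ A k ∪ Fk k ∧ ∀ w ∈ e, w ∈ S (ps k).1 (ps k).2}).Reachable u v)
    (hFkMin : ∀ k : Fin N, ∀ F' : Finset (Sym2 V),
      (∀ e ∈ F', ∀ w ∈ e, w ∈ S (ps k).1 (ps k).2) →
      (∀ u ∈ S (ps k).1 (ps k).2, ∀ v ∈ S (ps k).1 (ps k).2,
        (SimpleGraph.fromEdgeSet
          {e : Sym2 V | e ∈ A k ∪ F' ∧ ∀ w ∈ e, w ∈ S (ps k).1 (ps k).2}).Reachable u v) →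
      (Fk k).card ≤ F'.card) :
    ∀ k : Fin N, ∀ e ∈ OPT, asgn e < k →
      (∀ w ∈ e, w ∈ S (ps k).1 (ps k).2) →
      ∀ x y : V, e = s(x, y) →
        (SimpleGraph.fromEdgeSet
          {e' : Sym2 V | e' ∈ A k ∧ ∀ w ∈ e', w ∈ S (ps k).1 (ps k).2}).Reachable x y := by
    classical
  -- Two-point lemma: if (a,b) is a hard pair and x, y ∈ S a b, then S x y ⊆ S a b.
  have two_pt : ∀ a b : V, ¬ Easy S a b → ∀ x y : V,
      x ∈ S a b → y ∈ S a b → S x y ⊆ S a b := by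
    intro a b hhard x y hx hy
    have h1 : S a x ⊆ S a b := (hhier a b x hx).1
    have h2 : S b x ⊆ S a b := by rw [hsymm b x]; exact (hhier a b x hx).2
    by_cases hax : S a x = S a b
    · have hy' : y ∈ S x a := by rw [← hsymm a x, hax]; exact hy
      have := (hhier x a y hy').1
      rwa [hsymm x a, hax] at this
    · by_cases hbx : S b x = S a b
      · have hy' : y ∈ S x b := by rw [← hsymm b x, hbx]; exact hy
        have := (hhier x b y hy').1
        rwa [hsymm x b, hbx] at this
      · exact absurd ⟨x, hx, Finset.ssubset_iff_subset_ne.mpr ⟨h1, hax⟩,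
          Finset.ssubset_iff_subset_ne.mpr ⟨h2, hbx⟩⟩ hhard
  -- monotonicity of A
  have Amono : ∀ a b : ℕ, a ≤ b → b ≤ N → A a ⊆ A b := by
    intro a b hab hbN
    induction b with
    | zero =>
      have : a = 0 := by omega
      subst this; exact subset_rfl
    | succ n ihn =>
      rcases Nat.lt_or_ge a (n + 1) with h | h
      · have h1 : A a ⊆ A n := ihn (by omega) (by omega)
        have h2 : A (n + 1) = A n ∪ Fk ⟨n, by omega⟩ := hAsucc ⟨n, by omega⟩
        refine h1.trans ?_
        rw [h2]
        exact Finset.subset_union_left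
      · have : a = n + 1 := by omega
        subst this; exact subset_rfl
  -- main claim
  have key : ∀ n : ℕ, ∀ u w : V, (S u w).card ≤ n → ∀ k : Fin N,
      u ∈ S (ps k).1 (ps k).2 → w ∈ S (ps k).1 (ps k).2 →
      (∃ m : Fin N, m < k ∧ u ∈ S (ps m).1 (ps m).2 ∧ w ∈ S (ps m).1 (ps m).2) →
      (SimpleGraph.fromEdgeSet
          {e' : Sym2 V | e' ∈ A k ∧ ∀ v ∈ e', v ∈ S (ps k).1 (ps k).2}).Reachable u w := by
    intro n
    induction n using Nat.strong_induction_on with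
    | _ n ih =>
      intro u w hcard k hu hw hex0
      obtain ⟨m, hmk, hum, hwm⟩ := hex0
      by_cases huw : u = w
      · subst huw; exact SimpleGraph.Reachable.refl u
      -- least index whose safe set contains both u and w
      have hexP : ∃ t : ℕ, ∃ ht : t < N,
          u ∈ S (ps ⟨t, ht⟩).1 (ps ⟨t, ht⟩).2 ∧ w ∈ S (ps ⟨t, ht⟩).1 (ps ⟨t, ht⟩).2 :=
        ⟨m.val, m.isLt, hum, hwm⟩
      obtain ⟨ht0N, hut0, hwt0⟩ := Nat.find_spec hexP
      set t0 : ℕ := Nat.find hexP with ht0def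
      set m0 : Fin N := ⟨t0, ht0N⟩ with hm0def
      have hm0le : ∀ i : Fin N, u ∈ S (ps i).1 (ps i).2 → w ∈ S (ps i).1 (ps i).2 →
          m0 ≤ i := by
        intro i hui hwi
        have : t0 ≤ i.val := Nat.find_min' hexP ⟨i.isLt, hui, hwi⟩
        exact this
      have hm0k : m0 < k := lt_of_le_of_lt (hm0le m hum hwm) hmk
      have hsub0 : S u w ⊆ S (ps m0).1 (ps m0).2 :=
        two_pt _ _ (hpsHard m0).2 u w hut0 hwt0
      have hsubk : S u w ⊆ S (ps k).1 (ps k).2 :=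
        two_pt _ _ (hpsHard k).2 u w hu hw
      by_cases hEZ : Easy S u w
      · obtain ⟨v, hv, hv1, hv2⟩ := hEZ
        have r1 : (SimpleGraph.fromEdgeSet
            {e' : Sym2 V | e' ∈ A k ∧ ∀ v ∈ e', v ∈ S (ps k).1 (ps k).2}).Reachable u v := by
          refine ih (S u v).card (lt_of_lt_of_le (Finset.card_lt_card hv1) hcard)
            u v le_rfl k hu (hsubk hv) ⟨m0, hm0k, hut0, hsub0 hv⟩
        have r2 : (SimpleGraph.fromEdgeSet
            {e' : Sym2 V | e' ∈ A k ∧ ∀ v ∈ e', v ∈ S (ps k).1 (ps k).2}).Reachable v w := by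
          have hlt : (S v w).card < n := by
            have : (S v w).card < (S u w).card := by
              rw [hsymm v w]; exact Finset.card_lt_card hv2
            exact lt_of_lt_of_le this hcard
          refine ih (S v w).card hlt v w le_rfl k (hsubk hv) hw ⟨m0, hm0k, hsub0 hv, hwt0⟩
        exact r1.trans r2
      · -- (u,w) is a hard pair
        obtain ⟨i, hi⟩ := hpsSurj u w huw hEZ
        have hSi : S (ps i).1 (ps i).2 = S u w := by
          rcases hi with h | h
          · rw [h]
          · rw [h]; exact hsymm w u
        have hm0i : m0 ≤ i := by
          refine hm0le i ?_ ?_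
          · rw [hSi]; exact (hmem u w).1
          · rw [hSi]; exact (hmem u w).2
        have hcard2 : (S (ps m0).1 (ps m0).2).card ≤ (S u w).card := by
          have := hpsMono m0 i hm0i
          rwa [hSi] at this
        have hEq : S u w = S (ps m0).1 (ps m0).2 :=
          Finset.eq_of_subset_of_card_le hsub0 hcard2
        have hreach := hFkConn m0 u hut0 w hwt0
        refine hreach.mono (SimpleGraph.fromEdgeSet_mono ?_)
        intro e he
        obtain ⟨h1, h2⟩ := he
        constructor
        · have hmem1 : e ∈ A ((m0 : ℕ) + 1) := by rw [hAsucc m0]; exact h1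
          exact Amono ((m0 : ℕ) + 1) k (by exact_mod_cast hm0k) (le_of_lt k.isLt) hmem1
        · intro v hv
          have : v ∈ S u w := by rw [hEq]; exact h2 v hv
          exact hsubk this
  intro k e he hjk hek x y hexy
  have hxe : x ∈ e := by rw [hexy]; exact Sym2.mem_mk_left x y
  have hye : y ∈ e := by rw [hexy]; exact Sym2.mem_mk_right x y
  exact key (S x y).card x y le_rfl k (hek x hxe) (hek y hye)
    ⟨asgn e, hjk, hasgnMem e he x hxe, hasgnMem e he y hye⟩
end

section
/- Let V be a finite set with a symmetric hierarchical safe-set family, and let ⪯ be a linear order on the hard pairs such that {a,b} ⪯ {c,d} implies |S(a,b)| ≤ |S(c,d)|. Consider any greedy run: processing the hard pairs p_1 ≺ p_2 ≺ … ≺ p_N in order, set A_0 = ∅ and A_k = A_{k−1} ∪ F_k where F_k is a minimum-cardinality set of edges with both endpoints in S(p_k) making the restriction of A_{k−1} ∪ F_k to S(p_k) connected. Then the final edge set A_N is a feasible solution and |A_N| ≤ |OPT| for every feasible edge set OPT; that is, the greedy algorithm produces a minimum-cardinality feasible solution to Constrained Connectivity-Sum with symmetric hierarchical safe sets. -/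
/-- Restriction graph: edges of `E` lying inside `T`. -/
private def Rst {V : Type*} (E : Finset (Sym2 V)) (T : Finset V) : SimpleGraph V :=
  SimpleGraph.fromEdgeSet {e : Sym2 V | e ∈ E ∧ ∀ w ∈ e, w ∈ T}

private lemma Rst_mono {V : Type*} {E E' : Finset (Sym2 V)} {T T' : Finset V}
    (hE : E ⊆ E') (hT : T ⊆ T') : Rst E T ≤ Rst E' T' := by
  apply SimpleGraph.fromEdgeSet_mono
  rintro e ⟨he, hw⟩
  exact ⟨hE he, fun w hwe => hT (hw w hwe)⟩

private lemma Rst_le_fromEdgeSet {V : Type*} (E : Finset (Sym2 V)) (T : Finset V) :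
    Rst E T ≤ SimpleGraph.fromEdgeSet (↑E : Set (Sym2 V)) :=
  SimpleGraph.fromEdgeSet_mono fun _ he => he.1

private lemma Rst_support_subset {V : Type*} {E : Finset (Sym2 V)} {T : Finset V} :
    ∀ {x y : V} (p : (Rst E T).Walk x y), x ∈ T → ∀ v ∈ p.support, v ∈ T := by
  intro x y p
  induction p with
  | nil =>
    intro hx v hv
    simp only [SimpleGraph.Walk.support_nil, List.mem_singleton] at hv
    exact hv ▸ hx
  | cons h p ih =>
    intro hx v hv
    obtain ⟨⟨_, hins⟩, _⟩ := (SimpleGraph.fromEdgeSet_adj _).mp h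
    simp only [SimpleGraph.Walk.support_cons, List.mem_cons] at hv
    rcases hv with rfl | hv
    · exact hx
    · exact ih (hins _ (Sym2.mem_mk_right _ _)) v hv

private lemma exists_walk_fromEdgeSet {V : Type*} {E : Finset (Sym2 V)} {T : Finset V} :
    ∀ {x y : V} (p : (Rst E T).Walk x y),
      ∃ q : (SimpleGraph.fromEdgeSet (↑E : Set (Sym2 V))).Walk x y, q.support = p.support := by
  intro x y p
  induction p with
  | nil => exact ⟨.nil, rfl⟩
  | cons hadj p ih =>
    obtain ⟨q, hq⟩ := ih
    refine ⟨SimpleGraph.Walk.cons (Rst_le_fromEdgeSet E T hadj) q, ?_⟩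
    simp [SimpleGraph.Walk.support_cons, hq]

private lemma safewalk_of_reach {V : Type*} {E : Finset (Sym2 V)} {T : Finset V} {x y : V}
    (hx : x ∈ T) (h : (Rst E T).Reachable x y) : SafeWalk (↑E) (↑T) x y := by
  obtain ⟨p⟩ := h
  obtain ⟨q, hq⟩ := exists_walk_fromEdgeSet p
  exact ⟨q, by rw [hq]; exact fun v hv => Rst_support_subset p hx v hv⟩

private lemma reach_of_walk {V : Type*} {E : Finset (Sym2 V)} {T : Finset V} :
    ∀ {x y : V} (p : (SimpleGraph.fromEdgeSet (↑E : Set (Sym2 V))).Walk x y),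
      (∀ v ∈ p.support, v ∈ T) → (Rst E T).Reachable x y := by
  intro x y p
  induction p with
  | nil => exact fun _ => SimpleGraph.Reachable.refl _
  | cons hadj p ih =>
    intro hp
    rename_i a b c
    obtain ⟨he, hne⟩ := (SimpleGraph.fromEdgeSet_adj _).mp hadj
    have hsupp : ∀ v ∈ p.support, v ∈ T := by
      intro v hv
      exact hp v (by simp [SimpleGraph.Walk.support_cons, hv])
    have ha : a ∈ T := hp a (by simp [SimpleGraph.Walk.support_cons])
    have hb : b ∈ T := hp b (by simp [SimpleGraph.Walk.support_cons])
    have hadj' : (Rst E T).Adj a b := by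
      refine (SimpleGraph.fromEdgeSet_adj _).mpr ⟨⟨he, ?_⟩, hne⟩
      intro w hw
      rcases Sym2.mem_iff.mp hw with rfl | rfl
      · exact ha
      · exact hb
    exact hadj'.reachable.trans (ih hsupp)

private lemma reach_of_safewalk {V : Type*} {E : Finset (Sym2 V)} {T : Finset V} {x y : V}
    (h : SafeWalk (↑E) (↑T) x y) : (Rst E T).Reachable x y := by
  obtain ⟨p, hp⟩ := h
  exact reach_of_walk p hp

/-- The greedy algorithm — processing the hard pairs in an order monotone in
safe-set cardinality, at each step adding a minimum number of edges inside the
current safe set so as to make its restriction to the safe set connected —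
produces a feasible solution of minimum cardinality. -/
theorem stmt19 {V : Type*} [Fintype V] [DecidableEq V] (S : V → V → Finset V)
    (hmem : ∀ x y, x ∈ S x y ∧ y ∈ S x y)
    (hsymm : ∀ x y, S x y = S y x)
    (hhier : ∀ x y z, z ∈ S x y → S x z ⊆ S x y ∧ S z y ⊆ S x y)
    -- `ps` is an enumeration of the hard pairs, sorted by safe-set cardinality
    (N : ℕ) (ps : Fin N → V × V)
    (hpsHard : ∀ k, (ps k).1 ≠ (ps k).2 ∧ ¬ Easy S (ps k).1 (ps k).2)
    (hpsSurj : ∀ x y : V, x ≠ y → ¬ Easy S x y →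
      ∃ k, ps k = (x, y) ∨ ps k = (y, x))
    (hpsInj : ∀ k k' : Fin N,
      (ps k' = ps k ∨ ps k' = ((ps k).2, (ps k).1)) → k' = k)
    (hpsMono : ∀ k k' : Fin N, k ≤ k' →
      (S (ps k).1 (ps k).2).card ≤ (S (ps k').1 (ps k').2).card)
    -- the greedy run
    (A : ℕ → Finset (Sym2 V)) (Fk : Fin N → Finset (Sym2 V))
    (hA0 : A 0 = ∅)
    (hAsucc : ∀ k : Fin N, A (k + 1) = A k ∪ Fk k)
    (hFkIn : ∀ k : Fin N, ∀ e ∈ Fk k, ∀ w ∈ e, w ∈ S (ps k).1 (ps k).2)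
    (hFkConn : ∀ k : Fin N, ∀ u ∈ S (ps k).1 (ps k).2, ∀ v ∈ S (ps k).1 (ps k).2,
      (SimpleGraph.fromEdgeSet
        {e : Sym2 V | e ∈ A k ∪ Fk k ∧ ∀ w ∈ e, w ∈ S (ps k).1 (ps k).2}).Reachable u v)
    (hFkMin : ∀ k : Fin N, ∀ F' : Finset (Sym2 V),
      (∀ e ∈ F', ∀ w ∈ e, w ∈ S (ps k).1 (ps k).2) →
      (∀ u ∈ S (ps k).1 (ps k).2, ∀ v ∈ S (ps k).1 (ps k).2,
        (SimpleGraph.fromEdgeSet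
          {e : Sym2 V | e ∈ A k ∪ F' ∧ ∀ w ∈ e, w ∈ S (ps k).1 (ps k).2}).Reachable u v) →
      (Fk k).card ≤ F'.card) :
    (∀ x y, SafeWalk ↑(A N) ↑(S x y) x y) ∧
    ∀ OPT : Finset (Sym2 V), (∀ x y, SafeWalk ↑OPT ↑(S x y) x y) →
      (A N).card ≤ OPT.card := by
  classical
  -- Monotonicity of the accumulated edge set.
  have hAmono : ∀ m m' : ℕ, m ≤ m' → m' ≤ N → A m ⊆ A m' := by
    intro m m' h h'
    induction m' with
    | zero => rw [Nat.le_zero.mp h]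
    | succ j ih =>
      rcases Nat.lt_or_ge m (j + 1) with hlt | hge
      · have hj : j < N := lt_of_lt_of_le (Nat.lt_succ_self j) h'
        have hstep : A (j + 1) = A j ∪ Fk ⟨j, hj⟩ := hAsucc ⟨j, hj⟩
        rw [hstep]
        exact (ih (Nat.lt_succ_iff.mp hlt) (le_of_lt hj)).trans Finset.subset_union_left
      · have : m = j + 1 := le_antisymm h hge
        rw [this]
  -- the restricted connectivity established at step k
  have restConn : ∀ k : Fin N, ∀ u ∈ S (ps k).1 (ps k).2, ∀ v ∈ S (ps k).1 (ps k).2,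
      (Rst (A (↑k + 1)) (S (ps k).1 (ps k).2)).Reachable u v := by
    intro k u hu v hv
    have hstep : A (↑k + 1) = A ↑k ∪ Fk k := hAsucc k
    show (Rst (A (↑k + 1)) (S (ps k).1 (ps k).2)).Reachable u v
    rw [hstep]
    exact hFkConn k u hu v hv
  -- Hard pairs: every member's safe set to one endpoint is everything.
  have lemA : ∀ k : Fin N, ∀ z ∈ S (ps k).1 (ps k).2,
      S (ps k).1 z = S (ps k).1 (ps k).2 ∨ S (ps k).2 z = S (ps k).1 (ps k).2 := by
    intro k z hz
    by_contra hcon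
    push_neg at hcon
    apply (hpsHard k).2
    refine ⟨z, hz, ?_, ?_⟩
    · exact (hhier (ps k).1 (ps k).2 z hz).1.ssubset_of_ne hcon.1
    · have : S (ps k).2 z ⊆ S (ps k).1 (ps k).2 :=
        (hsymm (ps k).2 z) ▸ (hhier (ps k).1 (ps k).2 z hz).2
      exact this.ssubset_of_ne hcon.2
  -- Hard safe sets are closed under S.
  have closed : ∀ k : Fin N, ∀ u v : V, u ∈ S (ps k).1 (ps k).2 → v ∈ S (ps k).1 (ps k).2 →
      S u v ⊆ S (ps k).1 (ps k).2 := by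
    intro k u v hu hv
    rcases lemA k u hu with h | h
    · have hv' : v ∈ S (ps k).1 u := h ▸ hv
      have hsub : S v u ⊆ S (ps k).1 u := (hhier (ps k).1 u v hv').2
      calc S u v = S v u := hsymm u v
        _ ⊆ S (ps k).1 u := hsub
        _ = S (ps k).1 (ps k).2 := h
    · have hv' : v ∈ S (ps k).2 u := h ▸ hv
      have hsub : S v u ⊆ S (ps k).2 u := (hhier (ps k).2 u v hv').2
      calc S u v = S v u := hsymm u v
        _ ⊆ S (ps k).2 u := hsub
        _ = S (ps k).1 (ps k).2 := h
  -- Master connectivity lemma.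
  have connUpTo : ∀ n : ℕ, ∀ u v : V, (S u v).card ≤ n → ∀ m : ℕ, m ≤ N →
      (∀ j : Fin N, m ≤ ↑j → (S u v).card < (S (ps j).1 (ps j).2).card) →
      (Rst (A m) (S u v)).Reachable u v := by
    intro n
    induction n with
    | zero =>
      intro u v hcard _ _ _
      exact absurd hcard (by
        have : 0 < (S u v).card := Finset.card_pos.mpr ⟨u, (hmem u v).1⟩
        omega)
    | succ n ih =>
      intro u v hcard m hm hbound
      by_cases huv : u = v
      · exact huv ▸ SimpleGraph.Reachable.refl _
      by_cases heasy : Easy S u v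
      · obtain ⟨z, hz, h1, h2⟩ := heasy
        have c1 : (S u z).card < (S u v).card := Finset.card_lt_card h1
        have c2' : (S v z).card < (S u v).card := Finset.card_lt_card h2
        have r1 : (Rst (A m) (S u z)).Reachable u z :=
          ih u z (by omega) m hm (fun j hj => lt_trans c1 (hbound j hj))
        have r2 : (Rst (A m) (S v z)).Reachable v z :=
          ih v z (by omega) m hm (fun j hj => lt_trans c2' (hbound j hj))
        have m1 : Rst (A m) (S u z) ≤ Rst (A m) (S u v) :=
          Rst_mono (Finset.Subset.refl _) h1.subset
        have m2 : Rst (A m) (S v z) ≤ Rst (A m) (S u v) :=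
          Rst_mono (Finset.Subset.refl _) h2.subset
        exact (r1.mono m1).trans (r2.mono m2).symm
      · obtain ⟨j, hj⟩ := hpsSurj u v huv heasy
        have hSj : S (ps j).1 (ps j).2 = S u v := by
          rcases hj with h | h
          · rw [h]
          · rw [h]; exact hsymm v u
        have hjm : (↑j : ℕ) < m := by
          by_contra hcon
          push_neg at hcon
          have := hbound j hcon
          rw [hSj] at this
          exact lt_irrefl _ this
        have hu' : u ∈ S (ps j).1 (ps j).2 := by rw [hSj]; exact (hmem u v).1
        have hv' : v ∈ S (ps j).1 (ps j).2 := by rw [hSj]; exact (hmem u v).2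
        have r := restConn j u hu' v hv'
        rw [hSj] at r
        exact r.mono (Rst_mono (hAmono (↑j + 1) m (by omega) hm) (Finset.Subset.refl _))
  -- Feasibility of the final greedy solution.
  have feas : ∀ x y : V, SafeWalk ↑(A N) ↑(S x y) x y := by
    intro x y
    apply safewalk_of_reach (hmem x y).1
    exact connUpTo ((S x y).card) x y le_rfl N le_rfl
      (fun j hj => absurd hj (not_le.mpr j.isLt))
  refine ⟨feas, ?_⟩
  -- Optimality.
  intro OPT hOPT
  -- OPT's restriction to each hard safe set is connected.
  have optConn : ∀ k : Fin N, ∀ u ∈ S (ps k).1 (ps k).2, ∀ v ∈ S (ps k).1 (ps k).2,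
      (Rst OPT (S (ps k).1 (ps k).2)).Reachable u v := by
    intro k
    have hxy : (Rst OPT (S (ps k).1 (ps k).2)).Reachable (ps k).1 (ps k).2 :=
      reach_of_safewalk (hOPT (ps k).1 (ps k).2)
    have key : ∀ z ∈ S (ps k).1 (ps k).2,
        (Rst OPT (S (ps k).1 (ps k).2)).Reachable (ps k).1 z := by
      intro z hz
      rcases lemA k z hz with h | h
      · have := reach_of_safewalk (hOPT (ps k).1 z)
        rw [h] at this
        exact this
      · have := reach_of_safewalk (hOPT (ps k).2 z)
        rw [h] at this
        exact hxy.trans this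
    intro u hu v hv
    exact (key u hu).symm.trans (key v hv)
  -- The charged OPT edges at each step.
  set Xk : Fin N → Finset (Sym2 V) := fun k => OPT.filter (fun e =>
    (∀ w ∈ e, w ∈ S (ps k).1 (ps k).2) ∧
    ∀ a b : V, e = s(a, b) → ¬ (Rst (A ↑k) (S (ps k).1 (ps k).2)).Reachable a b) with hXk
  have hXsub : ∀ k, Xk k ⊆ OPT := fun k => Finset.filter_subset _ _
  have hXin : ∀ k : Fin N, ∀ e ∈ Xk k, ∀ w ∈ e, w ∈ S (ps k).1 (ps k).2 :=
    fun k e he => ((Finset.mem_filter.mp he).2).1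
  -- A k together with the charged OPT edges connects the safe set.
  have hXconn : ∀ k : Fin N, ∀ u ∈ S (ps k).1 (ps k).2, ∀ v ∈ S (ps k).1 (ps k).2,
      (Rst (A ↑k ∪ Xk k) (S (ps k).1 (ps k).2)).Reachable u v := by
    intro k u hu v hv
    obtain ⟨p⟩ := optConn k u hu v hv
    clear hu
    induction p with
    | nil => exact SimpleGraph.Reachable.refl _
    | cons h p ih =>
      rename_i a b c
      obtain ⟨⟨heO, hins⟩, hne⟩ := (SimpleGraph.fromEdgeSet_adj _).mp h
      refine SimpleGraph.Reachable.trans ?_ (ih hv)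
      by_cases hr : (Rst (A ↑k) (S (ps k).1 (ps k).2)).Reachable a b
      · exact hr.mono (Rst_mono Finset.subset_union_left (Finset.Subset.refl _))
      · have hX : s(a, b) ∈ Xk k := by
          rw [hXk]
          refine Finset.mem_filter.mpr ⟨heO, hins, ?_⟩
          intro a' b' hab
          rcases Sym2.eq_iff.mp hab with ⟨rfl, rfl⟩ | ⟨rfl, rfl⟩
          · exact hr
          · exact fun hrr => hr hrr.symm
        have hadj : (Rst (A ↑k ∪ Xk k) (S (ps k).1 (ps k).2)).Adj a b :=
          (SimpleGraph.fromEdgeSet_adj _).mpr ⟨⟨Finset.mem_union_right _ hX, hins⟩, hne⟩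
        exact hadj.reachable
  -- Greedy uses at most as many edges per step as are charged.
  have hFX : ∀ k : Fin N, (Fk k).card ≤ (Xk k).card := by
    intro k
    apply hFkMin k (Xk k) (hXin k)
    intro u hu v hv
    exact hXconn k u hu v hv
  -- The charged sets are pairwise disjoint.
  have hXdisj : ∀ j k : Fin N, (↑j : ℕ) < ↑k → ∀ e ∈ Xk j, e ∉ Xk k := by
    intro j k hjk e hej hek
    obtain ⟨p, q, rfl⟩ : ∃ p q, e = s(p, q) := Sym2.ind (fun p q => ⟨p, q, rfl⟩) e
    obtain ⟨heO, hinsj, hcrossj⟩ := Finset.mem_filter.mp hej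
    obtain ⟨-, hinsk, hcrossk⟩ := Finset.mem_filter.mp hek
    have hcrossj' := hcrossj p q rfl
    have hpj : p ∈ S (ps j).1 (ps j).2 := hinsj p (Sym2.mem_mk_left p q)
    have hqj : q ∈ S (ps j).1 (ps j).2 := hinsj q (Sym2.mem_mk_right p q)
    have hsubj : S p q ⊆ S (ps j).1 (ps j).2 := closed j p q hpj hqj
    -- the safe set of a charged pair is exactly the current hard set
    have hSeq : S p q = S (ps j).1 (ps j).2 := by
      by_contra hne
      have hlt : (S p q).card < (S (ps j).1 (ps j).2).card :=
        Finset.card_lt_card (hsubj.ssubset_of_ne hne)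
      have hreach := connUpTo ((S p q).card) p q le_rfl ↑j (le_of_lt j.isLt)
        (fun i hi => lt_of_lt_of_le hlt (hpsMono j i (Fin.le_def.mpr hi)))
      exact hcrossj' (hreach.mono (Rst_mono (Finset.Subset.refl _) hsubj))
    -- after step j, p and q are connected inside S p q, hence inside any later set
    have hr1 : (Rst (A (↑j + 1)) (S (ps j).1 (ps j).2)).Reachable p q :=
      restConn j p hpj q hqj
    have hpk : p ∈ S (ps k).1 (ps k).2 := hinsk p (Sym2.mem_mk_left p q)
    have hqk : q ∈ S (ps k).1 (ps k).2 := hinsk q (Sym2.mem_mk_right p q)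
    have hsubk : S p q ⊆ S (ps k).1 (ps k).2 := closed k p q hpk hqk
    have hsub' : S (ps j).1 (ps j).2 ⊆ S (ps k).1 (ps k).2 := hSeq ▸ hsubk
    have : (Rst (A ↑k) (S (ps k).1 (ps k).2)).Reachable p q :=
      hr1.mono (Rst_mono (hAmono (↑j + 1) ↑k (by omega) (le_of_lt k.isLt)) hsub')
    exact hcrossk p q rfl this
  have hdisj : (↑(Finset.univ : Finset (Fin N)) : Set (Fin N)).PairwiseDisjoint Xk := by
    intro j _ k _ hjk
    show Disjoint (Xk j) (Xk k)
    rw [Finset.disjoint_left]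
    intro e hej hek
    rcases lt_or_gt_of_ne (fun h : (↑j : ℕ) = ↑k => hjk (Fin.ext h)) with h | h
    · exact hXdisj j k h e hej hek
    · exact hXdisj k j h e hek hej
  -- Assemble the counting.
  have hAsubUnion : A N ⊆ Finset.univ.biUnion (fun k : Fin N => Fk k) := by
    have key : ∀ m : ℕ, m ≤ N → A m ⊆ Finset.univ.biUnion (fun k : Fin N => Fk k) := by
      intro m
      induction m with
      | zero => intro _; rw [hA0]; exact Finset.empty_subset _
      | succ j ih =>
        intro h
        have hj : j < N := h
        have hstep : A (j + 1) = A j ∪ Fk ⟨j, hj⟩ := hAsucc ⟨j, hj⟩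
        rw [hstep]
        apply Finset.union_subset (ih (le_of_lt hj))
        intro e he
        exact Finset.mem_biUnion.mpr ⟨⟨j, hj⟩, Finset.mem_univ _, he⟩
    exact key N le_rfl
  calc (A N).card ≤ (Finset.univ.biUnion (fun k : Fin N => Fk k)).card :=
        Finset.card_le_card hAsubUnion
    _ ≤ ∑ k : Fin N, (Fk k).card := Finset.card_biUnion_le
    _ ≤ ∑ k : Fin N, (Xk k).card := Finset.sum_le_sum (fun k _ => hFX k)
    _ = (Finset.univ.biUnion Xk).card := (Finset.card_biUnion (fun j hj k hk hjk =>
          hdisj hj hk hjk)).symm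
    _ ≤ OPT.card := Finset.card_le_card (Finset.biUnion_subset.mpr (fun k _ => hXsub k))
end
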